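/- arXiv:1803.04441 — 3 statements merged into one kernel-verified Lean document; each statement's English description precedes it below -/
import Mathlib

section
/- For every a ∈ 𝒥(R) and every b ∈ R[[t]] whose coefficients in degrees 0 and 1 vanish, the series t + εb belongs to 𝒥(R[ε]) and, in R[ε][[t]], a ∘ (t + εb) = a + ε·(a′·b) = a ⋆ (t + εb), where a′ denotes the formal derivative of a with respect to t. In particular the 'differentials at the unit' of the left multiplications by a for ∘ and for ⋆ coincide. -/
open PowerSeries

/-- The set `𝒥(R)` of formal power series `t + ∑_{i≥1} α_i t^{i+1}`. -/
def Jset (R : Type*) [Ring R] : Set (PowerSeries R) :=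
  {f | coeff (R := R) 0 f = 0 ∧ coeff (R := R) 1 f = 1}

/-- The substitution product `f ∘ g = ∑_{m ≥ 0} α_m g^{m+1}`, defined coefficientwise. -/
noncomputable def Jcomp {R : Type*} [Ring R] (f g : PowerSeries R) : PowerSeries R :=
  PowerSeries.mk fun k => ∑ m ∈ Finset.range k, coeff (R := R) (m + 1) f * coeff (R := R) k (g ^ (m + 1))

/-- The formal derivative `d/dt` on `R[[t]]` (coefficientwise). -/
noncomputable def Dser {R : Type*} [Ring R] (f : PowerSeries R) : PowerSeries R :=
  PowerSeries.mk fun n => (n + 1 : ℕ) • coeff (R := R) (n + 1) f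

/-- The product `f ⋆ g := t + (f − t) + (g − t) + (f − t)′·(g − t)`. -/
noncomputable def Jstar {R : Type*} [Ring R] (f g : PowerSeries R) : PowerSeries R :=
  X + (f - X) + (g - X) + Dser (f - X) * (g - X)

section Aux

variable {R : Type*} [Ring R]

lemma C_eps_comm (f : PowerSeries (DualNumber R)) :
    Commute (PowerSeries.C (R := DualNumber R) DualNumber.eps) f := by
  refine PowerSeries.ext fun n => ?_
  rw [coeff_C_mul, coeff_mul_C, (DualNumber.commute_eps_left _).eq]

lemma sq_zero_pow (x p : R) (h : Commute x p) (hp : p * p = 0) (n : ℕ) :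
    (x + p) ^ (n + 1) = x ^ (n + 1) + (n + 1) • (x ^ n * p) := by
  induction n with
  | zero => simp
  | succ n ih =>
    have h1 : x ^ n * p * x = x ^ (n + 1) * p := by
      rw [mul_assoc, ← h.eq, ← mul_assoc, ← pow_succ]
    have h2 : x ^ n * p * p = 0 := by rw [mul_assoc, hp, mul_zero]
    rw [pow_succ _ (n + 1), ih, add_mul, mul_add, mul_add, smul_mul_assoc, smul_mul_assoc,
      h1, h2, smul_zero, add_zero, ← pow_succ, add_assoc]
    congr 1
    conv_rhs => rw [succ_nsmul]
    rw [add_comm]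

lemma Dser_sub (f g : PowerSeries R) : Dser (f - g) = Dser f - Dser g := by
  refine PowerSeries.ext fun n => ?_
  simp [Dser, smul_sub]

lemma Dser_X : Dser (X : PowerSeries R) = 1 := by
  refine PowerSeries.ext fun n => ?_
  simp only [Dser, coeff_mk, coeff_X, coeff_one]
  rcases n with _ | n <;> simp

end Aux

/-- For `a ∈ 𝒥(R)` and `b ∈ R[[t]]` with vanishing coefficients in degrees `0` and `1`,
the series `t + εb` lies in `𝒥(R[ε])` and, in `R[ε][[t]]`,
`a ∘ (t + εb) = a + ε(a′·b) = a ⋆ (t + εb)`; in particular the differentials at the unit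
of left multiplication by `a` for `∘` and `⋆` coincide. -/
theorem statement3 (R : Type*) [Ring R] (a : PowerSeries R) (ha : a ∈ Jset R)
    (b : PowerSeries R) (hb0 : coeff (R := R) 0 b = 0) (hb1 : coeff (R := R) 1 b = 0) :
    (X + PowerSeries.C (R := DualNumber R) DualNumber.eps *
        PowerSeries.map (TrivSqZeroExt.inlHom R R) b ∈ Jset (DualNumber R)) ∧
    Jcomp (PowerSeries.map (TrivSqZeroExt.inlHom R R) a)
        (X + PowerSeries.C (R := DualNumber R) DualNumber.eps *
          PowerSeries.map (TrivSqZeroExt.inlHom R R) b) =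
      PowerSeries.map (TrivSqZeroExt.inlHom R R) a +
        PowerSeries.C (R := DualNumber R) DualNumber.eps *
          (Dser (PowerSeries.map (TrivSqZeroExt.inlHom R R) a) *
            PowerSeries.map (TrivSqZeroExt.inlHom R R) b) ∧
    Jstar (PowerSeries.map (TrivSqZeroExt.inlHom R R) a)
        (X + PowerSeries.C (R := DualNumber R) DualNumber.eps *
          PowerSeries.map (TrivSqZeroExt.inlHom R R) b) =
      PowerSeries.map (TrivSqZeroExt.inlHom R R) a +
        PowerSeries.C (R := DualNumber R) DualNumber.eps *
          (Dser (PowerSeries.map (TrivSqZeroExt.inlHom R R) a) *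
            PowerSeries.map (TrivSqZeroExt.inlHom R R) b) := by
  obtain ⟨ha0, ha1⟩ := ha
  set E : PowerSeries (DualNumber R) := PowerSeries.C (R := DualNumber R) DualNumber.eps with hE
  set A : PowerSeries (DualNumber R) := PowerSeries.map (TrivSqZeroExt.inlHom R R) a with hA
  set B : PowerSeries (DualNumber R) := PowerSeries.map (TrivSqZeroExt.inlHom R R) b with hB
  have hB0 : coeff (R := DualNumber R) 0 B = 0 := by simp [hB, hb0]
  have hB1 : coeff (R := DualNumber R) 1 B = 0 := by simp [hB, hb1]
  have hA0 : coeff (R := DualNumber R) 0 A = 0 := by simp [hA, ha0]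
  have hEB0 : coeff (R := DualNumber R) 0 (E * B) = 0 := by
    rw [hE, coeff_C_mul, hB0]; simp
  have hEB1 : coeff (R := DualNumber R) 1 (E * B) = 0 := by
    rw [hE, coeff_C_mul, hB1]; simp
  have hP2 : (E * B) * (E * B) = 0 := by
    rw [mul_assoc, ← mul_assoc B E, ← (C_eps_comm B).eq, mul_assoc, ← mul_assoc E E,
      hE, ← map_mul, DualNumber.eps_mul_eps, map_zero, zero_mul]
  have hXP : Commute (X : PowerSeries (DualNumber R)) (E * B) := (commute_X _).symm
  refine ⟨⟨?_, ?_⟩, ?_, ?_⟩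
  · rw [map_add, hEB0, add_zero, coeff_zero_X]
  · rw [map_add, hEB1, add_zero, coeff_one_X]
  · -- Jcomp part
    refine PowerSeries.ext fun k => ?_
    rcases k with _ | k
    · rw [Jcomp, coeff_mk, Finset.range_zero, Finset.sum_empty, map_add, hA0, coeff_C_mul,
        coeff_mul, Finset.Nat.antidiagonal_zero, Finset.sum_singleton]
      simp [hB0]
    rw [Jcomp, coeff_mk]
    have hgpow : ∀ m, coeff (R := DualNumber R) (k + 1) ((X + E * B) ^ (m + 1)) =
        (if k + 1 = m + 1 then 1 else 0) +
          (m + 1) • coeff (R := DualNumber R) (k + 1) (X ^ m * (E * B)) := by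
      intro m
      rw [sq_zero_pow _ _ hXP hP2, map_add, coeff_X_pow, map_nsmul]
    calc (∑ m ∈ Finset.range (k + 1),
          coeff (R := DualNumber R) (m + 1) A * coeff (R := DualNumber R) (k + 1) ((X + E * B) ^ (m + 1)))
        = ∑ m ∈ Finset.range (k + 1), (coeff (R := DualNumber R) (m + 1) A *
            (if k + 1 = m + 1 then 1 else 0) +
          coeff (R := DualNumber R) (m + 1) A *
            ((m + 1) • coeff (R := DualNumber R) (k + 1) (X ^ m * (E * B)))) := by
          refine Finset.sum_congr rfl fun m _ => ?_
          rw [hgpow, mul_add]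
      _ = coeff (R := DualNumber R) (k + 1) A +
          ∑ m ∈ Finset.range (k + 1), coeff (R := DualNumber R) (m + 1) A *
            ((m + 1) • coeff (R := DualNumber R) (k + 1) (X ^ m * (E * B))) := by
          rw [Finset.sum_add_distrib]
          congr 1
          rw [Finset.sum_eq_single k]
          · simp
          · intro m _ hm
            rw [if_neg (by omega), mul_zero]
          · intro h; exact absurd (Finset.self_mem_range_succ k) h
      _ = coeff (R := DualNumber R) (k + 1) (A + E * (Dser A * B)) := by
          rw [map_add, coeff_C_mul]
          congr 1
          rw [coeff_mul, Finset.Nat.sum_antidiagonal_eq_sum_range_succ_mk]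
          conv_rhs => rw [Finset.sum_range_succ]
          have h0 : coeff (R := DualNumber R) (k + 1 - (k + 1)) B = 0 := by simpa using hB0
          rw [h0, mul_zero, add_zero, Finset.mul_sum]
          refine Finset.sum_congr rfl fun m hm => ?_
          have hm' : m < k + 1 := Finset.mem_range.mp hm
          rw [Dser, coeff_mk, coeff_X_pow_mul', if_pos (by omega : m ≤ k + 1), hE,
            coeff_C_mul, mul_smul_comm, ← mul_assoc, ← (DualNumber.commute_eps_left _).eq,
            mul_assoc, ← mul_smul_comm, smul_mul_assoc]
  · -- Jstar part
    rw [Jstar, Dser_sub, Dser_X]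
    have h1 : Dser A * (E * B) = E * (Dser A * B) := by
      rw [← mul_assoc, ← (C_eps_comm (Dser A)).eq, mul_assoc]
    rw [← h1]
    noncomm_ring
end

section
/- Let n, i ≥ 1 and α, β ∈ R. Let h ∈ 𝒥(R) satisfy h ≡ t + α t^{n+1} (mod 𝒥_{n+1}(R)) and set a := t + β t^{i+1}. Then the loop commutator satisfies [a,h] ≡ t + ((i+1)βα − (n+1)αβ)·t^{n+i+1} (mod 𝒥_{n+i+1}(R)). -/
open PowerSeries

/-- `f ≡ g (mod 𝒥_n(R))`: the coefficients of `t^{i+1}` coincide for `1 ≤ i ≤ n − 1`. -/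
def JModEq {R : Type*} [Ring R] (n : ℕ) (f g : PowerSeries R) : Prop :=
  ∀ i, 1 ≤ i → i < n → coeff (R := R) (i + 1) f = coeff (R := R) (i + 1) g

section Aux

open Finset

private lemma aux_mul_small {R : Type*} [Ring R] (φ ψ : PowerSeries R) (c d k : ℕ)
    (hφ : ∀ j < c, coeff (R := R) j φ = 0) (hψ : ∀ j < d, coeff (R := R) j ψ = 0) (hk : k < c + d) :
    coeff (R := R) k (φ * ψ) = 0 := by
  rw [coeff_mul]
  apply Finset.sum_eq_zero
  intro p hp
  rw [Finset.HasAntidiagonal.mem_antidiagonal] at hp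
  by_cases h1 : p.1 < c
  · rw [hφ _ h1, zero_mul]
  · rw [hψ _ (by omega), mul_zero]

private lemma aux_pow_small {R : Type*} [Ring R] (φ : PowerSeries R) (c : ℕ)
    (hφ : ∀ j < c, coeff (R := R) j φ = 0) :
    ∀ s, ∀ k < s * c, coeff (R := R) (k : ℕ) (φ ^ s) = 0 := by
  intro s
  induction s with
  | zero => intro k hk; exact absurd hk (by omega)
  | succ s ih =>
      intro k hk
      rw [Nat.succ_mul] at hk
      rw [pow_succ]
      exact aux_mul_small _ _ (s * c) c k ih hφ hk

private lemma pow_coeff {R : Type*} [Ring R] (f : PowerSeries R) (r : ℕ) (hr : 1 ≤ r)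
    (f0 : coeff (R := R) 0 f = 0) (f1 : coeff (R := R) 1 f = 1)
    (fz : ∀ j, 2 ≤ j → j ≤ r → coeff (R := R) j f = 0)
    (m : ℕ) (hm : 1 ≤ m) (k : ℕ) (hk : k ≤ m + r) :
    coeff (R := R) k (f ^ m)
      = (if k = m then 1 else 0)
        + (if k = m + r then coeff (R := R) (r + 1) f * (m : R) else 0) := by
  set g := f - X with hg
  have hfg : f = X + g := by rw [hg]; abel
  have hgc : ∀ j < r + 1, coeff (R := R) j g = 0 := by
    intro j hj
    rw [hg, map_sub]
    rcases j with _ | _ | j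
    · rw [f0, coeff_X, if_neg (by omega), sub_zero]
    · rw [f1, coeff_X, if_pos rfl, sub_self]
    · rw [fz _ (by omega) (by omega), coeff_X, if_neg (by omega), sub_zero]
  have hgf : coeff (R := R) (r + 1) g = coeff (R := R) (r + 1) f := by
    rw [hg, map_sub, coeff_X, if_neg (by omega), sub_zero]
  have hX : ∀ (s j : ℕ), j < s → coeff (R := R) j (X ^ s : PowerSeries R) = 0 := by
    intro s j hj; rw [coeff_X_pow, if_neg (by omega)]
  conv_lhs => rw [hfg]
  rw [(commute_X g).symm.add_pow, map_sum]
  have hterm : ∀ j ∈ Finset.range (m + 1),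
      coeff (R := R) k (X ^ j * g ^ (m - j) * ((m.choose j : ℕ) : PowerSeries R))
        = (if j = m then (if k = m then 1 else 0) else 0)
          + (if j = m - 1 then (if k = m + r then coeff (R := R) (r + 1) f * (m : R) else 0) else 0) := by
    intro j hj
    rw [Finset.mem_range] at hj
    rw [← map_natCast (C (R := R)) (m.choose j), coeff_mul_C]
    by_cases hjm : j = m
    · subst hjm
      rw [Nat.sub_self, pow_zero, mul_one, coeff_X_pow, Nat.choose_self, Nat.cast_one, mul_one,
        if_pos rfl, if_neg (show j ≠ j - 1 by omega), add_zero]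
    · by_cases hjm1 : j = m - 1
      · subst hjm1
        have hsub : m - (m - 1) = 1 := by omega
        have hch : m.choose (m - 1) = m := by
          rw [show m.choose (m - 1) = m.choose 1 from Nat.choose_symm (by omega),
            Nat.choose_one_right]
        rw [hsub, pow_one, if_neg hjm, if_pos rfl, hch]
        by_cases hkmr : k = m + r
        · rw [if_pos hkmr, hkmr, show m + r = (r + 1) + (m - 1) by omega,
            coeff_X_pow_mul, hgf, zero_add]
        · rw [if_neg hkmr, aux_mul_small (X ^ (m - 1)) g (m - 1) (r + 1) k
            (hX (m - 1)) hgc (by omega), zero_mul, zero_add]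
      · rw [if_neg hjm, if_neg hjm1]
        have h2 : 2 ≤ m - j := by omega
        have h3 : 2 * r ≤ (m - j) * r := Nat.mul_le_mul_right r h2
        have h4 : (m - j) * (r + 1) = (m - j) * r + (m - j) := by ring
        rw [aux_mul_small (X ^ j) (g ^ (m - j)) j ((m - j) * (r + 1)) k (hX j)
          (aux_pow_small g (r + 1) hgc (m - j)) (by omega), zero_mul, add_zero]
  rw [Finset.sum_congr rfl hterm, Finset.sum_add_distrib,
    Finset.sum_ite_eq' (Finset.range (m + 1)) m (fun _ => if k = m then (1 : R) else 0),
    Finset.sum_ite_eq' (Finset.range (m + 1)) (m - 1)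
      (fun _ => if k = m + r then coeff (R := R) (r + 1) f * (m : R) else 0),
    if_pos (Finset.mem_range.2 (by omega)), if_pos (Finset.mem_range.2 (by omega))]

private lemma coeff_Jcomp {R : Type*} [Ring R] (f g : PowerSeries R) (k : ℕ) :
    coeff (R := R) k (Jcomp f g)
      = ∑ m ∈ Finset.range k, coeff (R := R) (m + 1) f * coeff (R := R) k (g ^ (m + 1)) := by
  rw [Jcomp, coeff_mk]

end Aux

/-- Let `h ≡ t + α t^{n+1} (mod 𝒥_{n+1}(R))` and `a = t + β t^{i+1}`.  Then the loop
commutator `[a,h] = (h ∘ a) \ (a ∘ h)` (formalized as: any `w ∈ 𝒥(R)` with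
`(h ∘ a) ∘ w = a ∘ h`) satisfies
`[a,h] ≡ t + ((i+1)βα − (n+1)αβ) t^{n+i+1} (mod 𝒥_{n+i+1}(R))`. -/
theorem statement8 (R : Type*) [Ring R] (n i : ℕ) (hn : 1 ≤ n) (hi : 1 ≤ i)
    (α β : R) (h : PowerSeries R) (hh : h ∈ Jset R)
    (hcong : JModEq (n + 1) h (X + monomial (R := R) (n + 1) α)) :
    ∀ w ∈ Jset R,
      Jcomp (Jcomp h (X + monomial (R := R) (i + 1) β)) w
          = Jcomp (X + monomial (R := R) (i + 1) β) h →
      JModEq (n + i + 1) w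
        (X + monomial (R := R) (n + i + 1)
          (((i + 1 : ℕ) : R) * (β * α) - ((n + 1 : ℕ) : R) * (α * β))) := by
  intro w hw heq
  obtain ⟨hw0, hw1⟩ := hw
  obtain ⟨hh0, hh1⟩ := hh
  set a : PowerSeries R := X + monomial (R := R) (i + 1) β with ha
  have hacoeff : ∀ k, coeff (R := R) k a = (if k = 1 then 1 else 0) + (if k = i + 1 then β else 0) := by
    intro k; rw [ha, map_add, coeff_X, coeff_monomial]
  have ha0 : coeff (R := R) 0 a = 0 := by
    rw [hacoeff, if_neg (by omega), if_neg (by omega), add_zero]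
  have ha1 : coeff (R := R) 1 a = 1 := by
    rw [hacoeff, if_pos rfl, if_neg (by omega), add_zero]
  have haz : ∀ j, 2 ≤ j → j ≤ i → coeff (R := R) j a = 0 := by
    intro j h2 hj
    rw [hacoeff, if_neg (by omega), if_neg (by omega), add_zero]
  have hai1 : coeff (R := R) (i + 1) a = β := by
    rw [hacoeff, if_neg (by omega), if_pos rfl, zero_add]
  have hhz : ∀ j, 2 ≤ j → j ≤ n → coeff (R := R) j h = 0 := by
    intro j h2 hj
    have hc := hcong (j - 1) (by omega) (by omega)
    rw [show j - 1 + 1 = j by omega] at hc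
    rw [hc, map_add, coeff_X, coeff_monomial, if_neg (by omega), if_neg (by omega), add_zero]
  have hhn : coeff (R := R) (n + 1) h = α := by
    have hc := hcong n hn (by omega)
    rw [hc, map_add, coeff_X, coeff_monomial, if_neg (by omega), if_pos rfl, zero_add]
  -- powers of a and h
  have hpa : ∀ m, 1 ≤ m → ∀ k, k ≤ m + i →
      coeff (R := R) k (a ^ m) = (if k = m then 1 else 0) + (if k = m + i then β * (m : R) else 0) := by
    intro m hm k hk
    have hp := pow_coeff a i hi ha0 ha1 haz m hm k hk
    rwa [hai1] at hp
  have hph : ∀ m, 1 ≤ m → ∀ k, k ≤ m + n →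
      coeff (R := R) k (h ^ m) = (if k = m then 1 else 0) + (if k = m + n then α * (m : R) else 0) := by
    intro m hm k hk
    have hp := pow_coeff h n hn hh0 hh1 hhz m hm k hk
    rwa [hhn] at hp
  -- coefficients of F = h ∘ a
  have hFk : ∀ k, 2 ≤ k → k ≤ n + i + 1 →
      coeff (R := R) k (Jcomp h a)
        = coeff (R := R) k h + (if k = i + 1 then β else 0)
            + (if k = n + i + 1 then α * (β * ((n + 1 : ℕ) : R)) else 0) := by
    intro k h2 hk
    rw [coeff_Jcomp]
    have hterm : ∀ m ∈ Finset.range k,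
        coeff (R := R) (m + 1) h * coeff (R := R) k (a ^ (m + 1))
          = (if m = k - 1 then coeff (R := R) k h else 0)
            + (if m = 0 then (if k = i + 1 then β else 0) else 0)
            + (if m = n then (if k = n + i + 1 then α * (β * ((n + 1 : ℕ) : R)) else 0) else 0) := by
      intro m hm
      rw [Finset.mem_range] at hm
      by_cases hm0 : m = 0
      · subst hm0
        rw [pow_one, hh1, one_mul, hacoeff, if_neg (by omega), zero_add,
          if_neg (show (0 : ℕ) ≠ k - 1 by omega), if_pos rfl,
          if_neg (show (0 : ℕ) ≠ n by omega), zero_add, add_zero]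
      · by_cases hmk : m = k - 1
        · subst hmk
          rw [show k - 1 + 1 = k by omega,
            hpa k (by omega) k (by omega), if_pos rfl,
            if_neg (show k ≠ k + i by omega), add_zero, mul_one,
            if_pos rfl, if_neg hm0, add_zero]
          by_cases hkn : k - 1 = n
          · rw [if_pos hkn, if_neg (show k ≠ n + i + 1 by omega), add_zero]
          · rw [if_neg hkn, add_zero]
        · by_cases hmn : m = n
          · rw [hmn, hhn, hpa (n + 1) (by omega) k (by omega),
              if_neg (show k ≠ n + 1 by omega), zero_add,
              if_neg (show n ≠ k - 1 by omega), if_neg (show n ≠ 0 by omega),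
              zero_add, zero_add, if_pos rfl]
            by_cases hktop : k = n + i + 1
            · rw [if_pos (show k = n + 1 + i by omega), if_pos hktop]
            · rw [if_neg (show k ≠ n + 1 + i by omega), if_neg hktop, mul_zero]
          · rw [if_neg hmk, if_neg hm0, if_neg hmn, zero_add, add_zero]
            by_cases hmsmall : m + 1 ≤ n
            · rw [hhz (m + 1) (by omega) hmsmall, zero_mul]
            · rw [hpa (m + 1) (by omega) k (by omega),
                if_neg (show k ≠ m + 1 by omega),
                if_neg (show k ≠ m + 1 + i by omega), add_zero, mul_zero]
    rw [Finset.sum_congr rfl hterm, Finset.sum_add_distrib, Finset.sum_add_distrib,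
      Finset.sum_ite_eq' (Finset.range k) (k - 1) (fun _ => coeff (R := R) k h),
      Finset.sum_ite_eq' (Finset.range k) 0 (fun _ => if k = i + 1 then β else 0),
      Finset.sum_ite_eq' (Finset.range k) n
        (fun _ => if k = n + i + 1 then α * (β * ((n + 1 : ℕ) : R)) else 0),
      if_pos (Finset.mem_range.2 (by omega)), if_pos (Finset.mem_range.2 (by omega))]
    by_cases hnk : n < k
    · rw [if_pos (Finset.mem_range.2 hnk)]
    · rw [if_neg (fun hmem => hnk (Finset.mem_range.1 hmem)),
        if_neg (show k ≠ n + i + 1 by omega)]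
  -- coefficients of G = a ∘ h
  have hGk : ∀ k, 2 ≤ k → k ≤ n + i + 1 →
      coeff (R := R) k (Jcomp a h)
        = coeff (R := R) k h + (if k = i + 1 then β else 0)
            + (if k = n + i + 1 then β * (α * ((i + 1 : ℕ) : R)) else 0) := by
    intro k h2 hk
    rw [coeff_Jcomp]
    have hterm : ∀ m ∈ Finset.range k,
        coeff (R := R) (m + 1) a * coeff (R := R) k (h ^ (m + 1))
          = (if m = 0 then coeff (R := R) k h else 0)
            + (if m = i then
                (if k = i + 1 then β else 0)
                  + (if k = n + i + 1 then β * (α * ((i + 1 : ℕ) : R)) else 0) else 0) := by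
      intro m hm
      rw [Finset.mem_range] at hm
      by_cases hm0 : m = 0
      · subst hm0
        rw [pow_one, ha1, one_mul, if_pos rfl, if_neg (show (0 : ℕ) ≠ i by omega), add_zero]
      · by_cases hmi : m = i
        · rw [hmi, hai1, hph (i + 1) (by omega) k (by omega),
            if_neg (show i ≠ 0 by omega), if_pos rfl, zero_add,
            mul_add, mul_ite, mul_ite, mul_one, mul_zero]
          by_cases hktop : k = i + 1 + n
          · rw [if_pos hktop, if_pos (show k = n + i + 1 by omega)]
          · rw [if_neg hktop, if_neg (show k ≠ n + i + 1 by omega)]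
        · rw [hacoeff, if_neg (by omega), if_neg (by omega), add_zero, zero_mul,
            if_neg hm0, if_neg hmi, add_zero]
    rw [Finset.sum_congr rfl hterm, Finset.sum_add_distrib,
      Finset.sum_ite_eq' (Finset.range k) 0 (fun _ => coeff (R := R) k h),
      Finset.sum_ite_eq' (Finset.range k) i
        (fun _ => (if k = i + 1 then β else 0)
          + (if k = n + i + 1 then β * (α * ((i + 1 : ℕ) : R)) else 0)),
      if_pos (Finset.mem_range.2 (by omega))]
    by_cases hik : i < k
    · rw [if_pos (Finset.mem_range.2 hik), ← add_assoc]
    · rw [if_neg (fun hmem => hik (Finset.mem_range.1 hmem)),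
        if_neg (show k ≠ i + 1 by omega), if_neg (show k ≠ n + i + 1 by omega), add_zero, add_zero]
  have hF1 : coeff (R := R) 1 (Jcomp h a) = 1 := by
    rw [coeff_Jcomp, Finset.sum_range_one, pow_one, hh1, ha1, one_mul]
  -- the division step
  have hwk : ∀ k, 2 ≤ k → k ≤ n + i + 1 → (∀ j, 2 ≤ j → j < k → coeff (R := R) j w = 0) →
      coeff (R := R) k w + coeff (R := R) k (Jcomp h a) = coeff (R := R) k (Jcomp a h) := by
    intro k h2 hk hprev
    have hc := congrArg (coeff (R := R) k) heq
    rw [coeff_Jcomp] at hc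
    rw [← hc]
    have hterm : ∀ m ∈ Finset.range k,
        coeff (R := R) (m + 1) (Jcomp h a) * coeff (R := R) k (w ^ (m + 1))
          = (if m = 0 then coeff (R := R) k w else 0)
            + (if m = k - 1 then coeff (R := R) k (Jcomp h a) else 0) := by
      intro m hm
      rw [Finset.mem_range] at hm
      have hpw := pow_coeff w (k - 1) (by omega) hw0 hw1
        (fun j hj1 hj2 => hprev j hj1 (by omega)) (m + 1) (by omega) k (by omega)
      rw [show k - 1 + 1 = k by omega] at hpw
      by_cases hm0 : m = 0
      · subst hm0
        rw [hpw, if_neg (show k ≠ 0 + 1 by omega), if_pos (show k = 0 + 1 + (k - 1) by omega),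
          hF1]
        simp [show (0 : ℕ) ≠ k - 1 by omega]
      · by_cases hmk : m = k - 1
        · subst hmk
          rw [show k - 1 + 1 = k by omega] at hpw ⊢
          rw [hpw, if_pos rfl, if_neg (show k ≠ k + (k - 1) by omega)]
          simp [show ¬(k - 1 = 0) by omega]
        · rw [hpw, if_neg (show k ≠ m + 1 by omega),
            if_neg (show k ≠ m + 1 + (k - 1) by omega)]
          simp [hm0, hmk]
    rw [Finset.sum_congr rfl hterm, Finset.sum_add_distrib,
      Finset.sum_ite_eq' (Finset.range k) 0 (fun _ => coeff (R := R) k w),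
      Finset.sum_ite_eq' (Finset.range k) (k - 1) (fun _ => coeff (R := R) k (Jcomp h a)),
      if_pos (Finset.mem_range.2 (by omega)), if_pos (Finset.mem_range.2 (by omega))]
  -- vanishing of intermediate coefficients
  have hzero : ∀ k, 2 ≤ k → k ≤ n + i → coeff (R := R) k w = 0 := by
    intro k
    induction k using Nat.strong_induction_on with
    | _ k ih =>
      intro h2 hk
      have h3 := hwk k h2 (by omega) (fun j hj1 hj2 => ih j hj2 hj1 (by omega))
      rw [hFk k h2 (by omega), hGk k h2 (by omega), if_neg (show k ≠ n + i + 1 by omega),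
        if_neg (show k ≠ n + i + 1 by omega), add_zero] at h3
      have h4 := eq_sub_of_add_eq h3
      rwa [sub_self] at h4
  -- the top coefficient
  have htop : coeff (R := R) (n + i + 1) w
      = ((i + 1 : ℕ) : R) * (β * α) - ((n + 1 : ℕ) : R) * (α * β) := by
    have h3 := hwk (n + i + 1) (by omega) le_rfl (fun j hj1 hj2 => hzero j hj1 (by omega))
    rw [hFk _ (by omega) le_rfl, hGk _ (by omega) le_rfl, if_pos rfl, if_pos rfl,
      if_neg (show n + i + 1 ≠ i + 1 by omega), add_zero] at h3
    have e1 : β * (α * ((i + 1 : ℕ) : R)) = ((i + 1 : ℕ) : R) * (β * α) := by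
      rw [← mul_assoc]
      exact ((Nat.cast_commute (i + 1) (β * α)).eq).symm
    have e2 : α * (β * ((n + 1 : ℕ) : R)) = ((n + 1 : ℕ) : R) * (α * β) := by
      rw [← mul_assoc]
      exact ((Nat.cast_commute (n + 1) (α * β)).eq).symm
    have h5 := eq_sub_of_add_eq h3
    rw [h5, e1, e2]
    abel
  intro j hj1 hj2
  rw [map_add, coeff_X, coeff_monomial, if_neg (by omega)]
  by_cases hj : j + 1 = n + i + 1
  · rw [if_pos hj, hj, zero_add, htop]
  · rw [if_neg hj, add_zero]
    exact hzero (j + 1) (by omega) (by omega)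
end

section
/- Let R be a simple unital associative K-algebra (its only two-sided ideals are 0 and R) and let H be a subloop of 𝒥(R) with H ≠ {t} and [𝒥(R),H] ⊆ H. Then there exists n ≥ 1 such that 𝒥_{n+2}(R) ⊆ H ⊆ 𝒥_n(R). -/
open PowerSeries

/-- `𝒥_n(R)`. -/
def JsetN (R : Type*) [Ring R] (n : ℕ) : Set (PowerSeries R) :=
  {f | f ∈ Jset R ∧ ∀ i, 1 ≤ i → i < n → coeff (R := R) (i + 1) f = 0}

open Finset

namespace JLoop

variable {R : Type*} [Ring R]

/-- `f = t + O(t^{d+1})`. -/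
def Dge (d : ℕ) (f : PowerSeries R) : Prop :=
  coeff (R := R) 0 f = 0 ∧ coeff (R := R) 1 f = 1 ∧ ∀ i, 2 ≤ i → i ≤ d → coeff (R := R) i f = 0

lemma Dge_X (d : ℕ) : Dge d (X : PowerSeries R) := by
  refine ⟨by simp, by simp, fun i h2 _ => ?_⟩
  rw [coeff_X, if_neg (by omega)]

lemma Dge.mono {d d' : ℕ} {f : PowerSeries R} (h : Dge d f) (hle : d' ≤ d) : Dge d' f :=
  ⟨h.1, h.2.1, fun i h2 hi => h.2.2 i h2 (le_trans hi hle)⟩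

lemma Dge.coeff_eq_X {d : ℕ} {f : PowerSeries R} (h : Dge d f) :
    ∀ i ≤ d, coeff (R := R) i f = coeff (R := R) i (X : PowerSeries R) := by
  intro i hi
  rcases Nat.lt_or_ge i 2 with h2 | h2
  · interval_cases i
    · rw [h.1, coeff_X, if_neg (by omega)]
    · rw [h.2.1, coeff_X, if_pos rfl]
  · rw [h.2.2 i h2 hi, coeff_X, if_neg (by omega)]

lemma Dge_one_iff {f : PowerSeries R} : Dge 1 f ↔ f ∈ Jset R := by
  constructor
  · intro h; exact ⟨h.1, h.2.1⟩
  · intro h; exact ⟨h.1, h.2, fun i h2 hi => by omega⟩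

lemma mem_Jset {f : PowerSeries R} (h : f ∈ Jset R) :
    coeff (R := R) 0 f = 0 ∧ coeff (R := R) 1 f = 1 := h

lemma coeff_pow_lt (g : PowerSeries R) (hg0 : coeff (R := R) 0 g = 0) :
    ∀ j k, k < j → coeff (R := R) k (g ^ j) = 0 := by
  intro j
  induction j with
  | zero => intro k hk; omega
  | succ j ih =>
    intro k hk
    rw [pow_succ, coeff_mul]
    refine Finset.sum_eq_zero fun p hp => ?_
    rw [Finset.HasAntidiagonal.mem_antidiagonal] at hp
    rcases Nat.eq_zero_or_pos p.2 with h2 | h2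
    · rw [h2, hg0, mul_zero]
    · rw [ih p.1 (by omega), zero_mul]

lemma coeff_pow_self (g : PowerSeries R) (hg0 : coeff (R := R) 0 g = 0)
    (hg1 : coeff (R := R) 1 g = 1) : ∀ j, coeff (R := R) j (g ^ j) = 1 := by
  intro j
  induction j with
  | zero => simp
  | succ j ih =>
    rw [pow_succ, coeff_mul]
    rw [Finset.sum_eq_single (j, 1)]
    · rw [ih, hg1, one_mul]
    · intro p hp hne
      rw [Finset.HasAntidiagonal.mem_antidiagonal] at hp
      rcases Nat.eq_zero_or_pos p.2 with h2 | h2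
      · rw [h2, hg0, mul_zero]
      · have : p.1 < j := by
          rcases Nat.lt_or_ge p.1 j with h | h
          · exact h
          · exfalso; apply hne
            have : p.1 = j ∧ p.2 = 1 := by omega
            exact Prod.ext this.1 this.2
        rw [coeff_pow_lt g hg0 j p.1 this, zero_mul]
    · intro h; exfalso; apply h; rw [Finset.HasAntidiagonal.mem_antidiagonal]

lemma coeff_pow_congr (g g' : PowerSeries R) (hg0 : coeff (R := R) 0 g = 0)
    (hg0' : coeff (R := R) 0 g' = 0) (s : ℕ)
    (hagree : ∀ i ≤ s, coeff (R := R) i g = coeff (R := R) i g') :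
    ∀ j k, k + 1 ≤ s + j → coeff (R := R) k (g ^ j) = coeff (R := R) k (g' ^ j) := by
  intro j
  induction j with
  | zero => intro k _; rfl
  | succ j ih =>
    intro k hk
    rw [pow_succ, pow_succ, coeff_mul, coeff_mul]
    refine Finset.sum_congr rfl fun p hp => ?_
    rw [Finset.HasAntidiagonal.mem_antidiagonal] at hp
    by_cases hq : p.2 ≤ s
    · rcases Nat.eq_zero_or_pos p.2 with h0 | h1
      · rw [h0, hg0, hg0', mul_zero, mul_zero]
      · rw [hagree p.2 hq, ih p.1 (by omega)]
    · have h1 : p.1 < j := by omega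
      rw [coeff_pow_lt g hg0 j p.1 h1, coeff_pow_lt g' hg0' j p.1 h1,
        zero_mul, zero_mul]

lemma coeff_pow_top (g g' : PowerSeries R) (hg0 : coeff (R := R) 0 g = 0)
    (hg0' : coeff (R := R) 0 g' = 0) (hg1 : coeff (R := R) 1 g = 1) (hg1' : coeff (R := R) 1 g' = 1)
    (t : ℕ) (ht : 2 ≤ t) (hagree : ∀ i < t, coeff (R := R) i g = coeff (R := R) i g') :
    ∀ j, coeff (R := R) (t + j) (g ^ (j + 1)) =
      coeff (R := R) (t + j) (g' ^ (j + 1)) + (j + 1) • (coeff (R := R) t g - coeff (R := R) t g') := by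
  intro j
  induction j with
  | zero =>
    rw [pow_one, pow_one, zero_add, one_smul]
    exact eq_add_of_sub_eq' rfl
  | succ j ih =>
    rw [show g ^ (j + 1 + 1) = g ^ (j + 1) * g from pow_succ g (j + 1),
      show g' ^ (j + 1 + 1) = g' ^ (j + 1) * g' from pow_succ g' (j + 1),
      coeff_mul, coeff_mul]
    have key : ∀ p ∈ antidiagonal (t + (j + 1)),
        coeff (R := R) p.1 (g ^ (j + 1)) * coeff (R := R) p.2 g =
        coeff (R := R) p.1 (g' ^ (j + 1)) * coeff (R := R) p.2 g' +
          ((if p = (t + j, 1) then (j + 1) • (coeff (R := R) t g - coeff (R := R) t g') else 0) +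
           (if p = (j + 1, t) then (coeff (R := R) t g - coeff (R := R) t g') else 0)) := by
      intro p hp
      rw [Finset.HasAntidiagonal.mem_antidiagonal] at hp
      rcases Nat.lt_or_ge p.2 t with hq | hq
      · -- p.2 < t
        have hne2 : p ≠ (j + 1, t) := by
          intro h; rw [h] at hq; exact absurd rfl (by omega : (t:ℕ) ≠ t) 
        rcases Nat.eq_zero_or_pos p.2 with h0 | h1
        · have hne1 : p ≠ (t + j, 1) := by
            intro h; rw [h] at h0; omega
          rw [if_neg hne1, if_neg hne2, h0, hg0, hg0', mul_zero, mul_zero,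
            add_zero, add_zero]
        · rcases Nat.eq_or_lt_of_le h1 with h1e | h2
          · -- p.2 = 1, p.1 = t + j
            have hp1 : p.1 = t + j := by omega
            have hpe : p = (t + j, 1) := Prod.ext hp1 h1e.symm
            rw [if_pos hpe, if_neg (by rw [hpe]; intro h; injection h with h1 h2; omega),
              hp1, ← h1e, hg1, hg1', mul_one, mul_one, ih, add_zero]
          · -- 2 ≤ p.2 < t
            have hne1 : p ≠ (t + j, 1) := by
              intro h; rw [h] at h2; omega
            rw [if_neg hne1, if_neg hne2, add_zero, add_zero,
              hagree p.2 hq,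
              coeff_pow_congr g g' hg0 hg0' (t - 1)
                (fun i hi => hagree i (by omega)) (j + 1) p.1 (by omega)]
      · rcases Nat.eq_or_lt_of_le hq with hqe | hqt
        · -- p.2 = t, p.1 = j + 1
          have hp1 : p.1 = j + 1 := by omega
          have hpe : p = (j + 1, t) := Prod.ext hp1 hqe.symm
          rw [if_pos hpe, if_neg (by rw [hpe]; intro h; injection h with h1 h2; omega),
            hp1, coeff_pow_self g hg0 hg1, coeff_pow_self g' hg0' hg1',
            one_mul, one_mul, ← hqe, zero_add]
          exact eq_add_of_sub_eq' rfl
        · -- p.2 > t, p.1 < j + 1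
          have h1 : p.1 < j + 1 := by omega
          have hne1 : p ≠ (t + j, 1) := by intro h; rw [h] at hqt; omega
          have hne2 : p ≠ (j + 1, t) := by intro h; rw [h] at h1; omega
          rw [if_neg hne1, if_neg hne2, coeff_pow_lt g hg0 _ _ h1,
            coeff_pow_lt g' hg0' _ _ h1, zero_mul, zero_mul, add_zero, add_zero]
    rw [Finset.sum_congr rfl key, Finset.sum_add_distrib, Finset.sum_add_distrib,
      Finset.sum_ite_eq' _ ((t + j, 1) : ℕ × ℕ),
      Finset.sum_ite_eq' _ ((j + 1, t) : ℕ × ℕ),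
      if_pos (by rw [Finset.HasAntidiagonal.mem_antidiagonal]; omega),
      if_pos (by rw [Finset.HasAntidiagonal.mem_antidiagonal]; omega)]
    have : (j + 1 + 1) • (coeff (R := R) t g - coeff (R := R) t g') =
        (j + 1) • (coeff (R := R) t g - coeff (R := R) t g') + (coeff (R := R) t g - coeff (R := R) t g') := by
      rw [succ_nsmul]
    rw [this]


lemma coeff_Jcomp (f g : PowerSeries R) (k : ℕ) :
    coeff (R := R) k (Jcomp f g) = ∑ m ∈ range k, coeff (R := R) (m + 1) f * coeff (R := R) k (g ^ (m + 1)) :=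
  coeff_mk _ _

lemma Jcomp_coeff_zero (f g : PowerSeries R) : coeff (R := R) 0 (Jcomp f g) = 0 := by
  rw [coeff_Jcomp]; simp

lemma Jcomp_coeff_one (f g : PowerSeries R) (hf1 : coeff (R := R) 1 f = 1)
    (hg1 : coeff (R := R) 1 g = 1) : coeff (R := R) 1 (Jcomp f g) = 1 := by
  rw [coeff_Jcomp, Finset.sum_range_one, pow_one, hf1, hg1, one_mul]

lemma Jcomp_mem_Jset {f g : PowerSeries R} (hf : f ∈ Jset R) (hg : g ∈ Jset R) :
    Jcomp f g ∈ Jset R :=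
  ⟨Jcomp_coeff_zero f g, Jcomp_coeff_one f g hf.2 hg.2⟩

lemma sum_split {M : Type*} [AddCommMonoid M] (F : ℕ → M) (s : ℕ) :
    ∑ m ∈ range (s + 2), F m = F 0 + (∑ m ∈ Ico 1 (s + 1), F m) + F (s + 1) := by
  rw [Finset.sum_range_succ, Finset.sum_range_succ']
  have : ∑ m ∈ Ico 1 (s + 1), F m = ∑ i ∈ range s, F (i + 1) := by
    rw [Finset.sum_Ico_eq_sum_range]
    simp only [Nat.add_sub_cancel]
    exact Finset.sum_congr rfl fun i _ => by rw [Nat.add_comm 1 i]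
  rw [this]
  abel

/-- The core expansion of a composition coefficient. -/
lemma coeff_Jcomp_eq (f g : PowerSeries R) (hf1 : coeff (R := R) 1 f = 1)
    (hg0 : coeff (R := R) 0 g = 0) (hg1 : coeff (R := R) 1 g = 1) (s : ℕ) :
    coeff (R := R) (s + 2) (Jcomp f g) = coeff (R := R) (s + 2) f + coeff (R := R) (s + 2) g +
      ∑ m ∈ Ico 1 (s + 1), coeff (R := R) (m + 1) f * coeff (R := R) (s + 2) (g ^ (m + 1)) := by
  rw [coeff_Jcomp, sum_split _ s, pow_one, hf1, one_mul,
    coeff_pow_self g hg0 hg1 (s + 2), mul_one]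
  abel

lemma coeff_Jcomp_add {f g : PowerSeries R} {p q : ℕ} (hp : 1 ≤ p) (hq : 1 ≤ q)
    (hf : Dge p f) (hg : Dge q g) :
    ∀ k, 2 ≤ k → k ≤ p + q → coeff (R := R) k (Jcomp f g) = coeff (R := R) k f + coeff (R := R) k g := by
  intro k h2 hk
  obtain ⟨s, rfl⟩ : ∃ s, k = s + 2 := ⟨k - 2, by omega⟩
  rw [coeff_Jcomp_eq f g hf.2.1 hg.1 hg.2.1 s]
  have : ∑ m ∈ Ico 1 (s + 1), coeff (R := R) (m + 1) f * coeff (R := R) (s + 2) (g ^ (m + 1)) = 0 := by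
    refine Finset.sum_eq_zero fun m hm => ?_
    rw [Finset.mem_Ico] at hm
    rcases Nat.lt_or_ge m p with hmp | hmp
    · rw [hf.2.2 (m + 1) (by omega) (by omega), zero_mul]
    · have := coeff_pow_congr g X hg.1 (by simp) q (hg.coeff_eq_X) (m + 1) (s + 2)
        (by omega)
      rw [this, coeff_X_pow, if_neg (by omega), mul_zero]
  rw [this, add_zero]

lemma coeff_Jcomp_boundary {f g : PowerSeries R} {p q : ℕ} (hp : 1 ≤ p) (hq : 1 ≤ q)
    (hf : Dge p f) (hg : Dge q g) :
    coeff (R := R) (p + q + 1) (Jcomp f g) = coeff (R := R) (p + q + 1) f + coeff (R := R) (p + q + 1) g +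
      coeff (R := R) (p + 1) f * ((p + 1) • coeff (R := R) (q + 1) g) := by
  obtain ⟨s, hs⟩ : ∃ s, p + q + 1 = s + 2 := ⟨p + q - 1, by omega⟩
  rw [hs, coeff_Jcomp_eq f g hf.2.1 hg.1 hg.2.1 s]
  have : ∑ m ∈ Ico 1 (s + 1), coeff (R := R) (m + 1) f * coeff (R := R) (s + 2) (g ^ (m + 1)) =
      coeff (R := R) (p + 1) f * ((p + 1) • coeff (R := R) (q + 1) g) := by
    rw [Finset.sum_eq_single p]
    · have htop := coeff_pow_top g X hg.1 (by simp) hg.2.1 (by simp) (q + 1)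
        (by omega) (fun i hi => hg.coeff_eq_X i (by omega)) p
      have hxc : coeff (R := R) (q + 1) (X : PowerSeries R) = 0 := by
        rw [coeff_X, if_neg (by omega)]
      have hXp : coeff (R := R) (q + 1 + p) ((X : PowerSeries R) ^ (p + 1)) = 0 := by
        rw [coeff_X_pow, if_neg (by omega)]
      have hs2 : s + 2 = q + 1 + p := by omega
      rw [hs2, htop, hXp, hxc, sub_zero, zero_add]
    · intro m hm hne
      rw [Finset.mem_Ico] at hm
      rcases Nat.lt_or_ge m p with hmp | hmp
      · rw [hf.2.2 (m + 1) (by omega) (by omega), zero_mul]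
      · have hmp' : p + 1 ≤ m := by omega
        have := coeff_pow_congr g X hg.1 (by simp) q (hg.coeff_eq_X) (m + 1) (s + 2)
          (by omega)
        rw [this, coeff_X_pow, if_neg (by omega), mul_zero]
    · intro h
      exfalso; apply h; rw [Finset.mem_Ico]; omega
  rw [this]

noncomputable def ldivC (u v : PowerSeries R) : ℕ → R
  | k =>
    if k = 1 then 1
    else if k ≤ 1 then 0
    else
      coeff (R := R) k v - coeff (R := R) k u -
        ∑ m ∈ Ico 1 (k - 1),
          coeff (R := R) (m + 1) u *
            coeff (R := R) k ((PowerSeries.mk fun i => if h : i < k then ldivC u v i else 0) ^ (m + 1))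
  termination_by k => k
  decreasing_by exact h

noncomputable def ldiv (u v : PowerSeries R) : PowerSeries R :=
  PowerSeries.mk (ldivC u v)

lemma ldivC_zero (u v : PowerSeries R) : ldivC u v 0 = 0 := by
  rw [ldivC]; norm_num

lemma ldivC_one (u v : PowerSeries R) : ldivC u v 1 = 1 := by
  rw [ldivC]; norm_num

lemma ldiv_mem_Jset (u v : PowerSeries R) : ldiv u v ∈ Jset R := by
  constructor
  · rw [ldiv, coeff_mk, ldivC_zero]
  · rw [ldiv, coeff_mk, ldivC_one]

lemma Jcomp_ldiv {u v : PowerSeries R} (hu : u ∈ Jset R) (hv : v ∈ Jset R) :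
    Jcomp u (ldiv u v) = v := by
  ext k
  rcases Nat.lt_or_ge k 2 with hk | hk
  · interval_cases k
    · rw [Jcomp_coeff_zero, hv.1]
    · rw [Jcomp_coeff_one u _ hu.2 (ldiv_mem_Jset u v).2, hv.2]
  obtain ⟨s, rfl⟩ : ∃ s, k = s + 2 := ⟨k - 2, by omega⟩
  have hw := ldiv_mem_Jset u v
  rw [coeff_Jcomp_eq u (ldiv u v) hu.2 hw.1 hw.2 s]
  have htr : ∀ m ∈ Ico 1 (s + 1),
      coeff (R := R) (m + 1) u * coeff (R := R) (s + 2) ((ldiv u v) ^ (m + 1)) =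
      coeff (R := R) (m + 1) u * coeff (R := R) (s + 2) ((PowerSeries.mk fun i => if h : i < s + 2 then ldivC u v i else 0) ^ (m + 1)) := by
    intro m hm
    rw [Finset.mem_Ico] at hm
    congr 1
    refine coeff_pow_congr _ _ hw.1 ?_ (s + 1) ?_ (m + 1) (s + 2) (by omega)
    · rw [coeff_mk, dif_pos (by omega : (0:ℕ) < s + 2), ldivC_zero]
    · intro i hi
      rw [ldiv, coeff_mk, coeff_mk, dif_pos (by omega : i < s + 2)]
  have hcw : coeff (R := R) (s + 2) (ldiv u v) = coeff (R := R) (s + 2) v - coeff (R := R) (s + 2) u -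
      ∑ m ∈ Ico 1 (s + 1),
        coeff (R := R) (m + 1) u *
          coeff (R := R) (s + 2) ((PowerSeries.mk fun i => if h : i < s + 2 then ldivC u v i else 0) ^ (m + 1)) := by
    rw [ldiv, coeff_mk]
    conv_lhs => rw [ldivC]
    rw [if_neg (by omega), if_neg (by omega)]
    norm_num
  rw [Finset.sum_congr rfl htr, hcw]
  abel

/-- Coefficients of a left quotient, by strong induction: if `u ∘ w = v` and `u, v`
agree in degrees `2..s`, then `coeff w = coeff v - coeff u` in degrees `2..s+1`. -/
lemma div_sub {u v w : PowerSeries R} (hu : u ∈ Jset R) (hv : v ∈ Jset R)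
    (hw : w ∈ Jset R) (heq : Jcomp u w = v) (s : ℕ) (hs : 1 ≤ s)
    (hagree : ∀ j, 2 ≤ j → j ≤ s → coeff (R := R) j u = coeff (R := R) j v) :
    ∀ j, 2 ≤ j → j ≤ s + 1 → coeff (R := R) j w = coeff (R := R) j v - coeff (R := R) j u := by
  intro j
  induction j using Nat.strong_induction_on with
  | _ j ih =>
    intro h2 hj
    obtain ⟨s', rfl⟩ : ∃ s', j = s' + 2 := ⟨j - 2, by omega⟩
    have hXw : ∀ i ≤ s' + 1, coeff (R := R) i w = coeff (R := R) i (X : PowerSeries R) := by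
      intro i hi
      rcases Nat.lt_or_ge i 2 with hlt | hge
      · interval_cases i
        · rw [hw.1, coeff_X, if_neg (by omega)]
        · rw [hw.2, coeff_X, if_pos rfl]
      · rw [ih i (by omega) hge (by omega), hagree i hge (by omega), sub_self,
          coeff_X, if_neg (by omega)]
    have hcomp := coeff_Jcomp_eq u w hu.2 hw.1 hw.2 s'
    rw [heq] at hcomp
    have hmid : ∑ m ∈ Ico 1 (s' + 1),
        coeff (R := R) (m + 1) u * coeff (R := R) (s' + 2) (w ^ (m + 1)) = 0 := by
      refine Finset.sum_eq_zero fun m hm => ?_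
      rw [Finset.mem_Ico] at hm
      rw [coeff_pow_congr w X hw.1 (by simp) (s' + 1) hXw (m + 1) (s' + 2) (by omega),
        coeff_X_pow, if_neg (by omega), mul_zero]
    rw [hmid, add_zero] at hcomp
    exact eq_sub_of_add_eq' hcomp.symm

lemma div_dge {u v w : PowerSeries R} (hu : u ∈ Jset R) (hv : v ∈ Jset R)
    (hw : w ∈ Jset R) (heq : Jcomp u w = v) (s : ℕ) (hs : 1 ≤ s)
    (hagree : ∀ j, 2 ≤ j → j ≤ s → coeff (R := R) j u = coeff (R := R) j v) : Dge s w :=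
  ⟨hw.1, hw.2, fun i h2 hi => by
    rw [div_sub hu hv hw heq s hs hagree i h2 (by omega), hagree i h2 hi, sub_self]⟩

/-- The loop commutator `[g,h] = (h∘g) \ (g∘h)`. -/
noncomputable def Komm (h g : PowerSeries R) : PowerSeries R :=
  ldiv (Jcomp h g) (Jcomp g h)

lemma Komm_mem_Jset (h g : PowerSeries R) : Komm h g ∈ Jset R :=
  ldiv_mem_Jset _ _

lemma Komm_eq {h g : PowerSeries R} (hh : h ∈ Jset R) (hg : g ∈ Jset R) :
    Jcomp (Jcomp h g) (Komm h g) = Jcomp g h :=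
  Jcomp_ldiv (Jcomp_mem_Jset hh hg) (Jcomp_mem_Jset hg hh)

lemma Komm_dge {h g : PowerSeries R} {m d : ℕ} (hm : 1 ≤ m) (hd : 1 ≤ d)
    (hgm : Dge m g) (hhd : Dge d h) : Dge (m + d) (Komm h g) := by
  have hh : h ∈ Jset R := ⟨hhd.1, hhd.2.1⟩
  have hg : g ∈ Jset R := ⟨hgm.1, hgm.2.1⟩
  refine div_dge (Jcomp_mem_Jset hh hg) (Jcomp_mem_Jset hg hh) (Komm_mem_Jset h g)
    (Komm_eq hh hg) (m + d) (by omega) ?_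
  intro j h2 hj
  rw [coeff_Jcomp_add hd hm hhd hgm j h2 (by omega),
    coeff_Jcomp_add hm hd hgm hhd j h2 (by omega), add_comm]

lemma Komm_coeff_top {h g : PowerSeries R} {m d : ℕ} (hm : 1 ≤ m) (hd : 1 ≤ d)
    (hgm : Dge m g) (hhd : Dge d h) :
    coeff (R := R) (m + d + 1) (Komm h g) =
      coeff (R := R) (m + 1) g * ((m + 1) • coeff (R := R) (d + 1) h) -
        coeff (R := R) (d + 1) h * ((d + 1) • coeff (R := R) (m + 1) g) := by
  have hh : h ∈ Jset R := ⟨hhd.1, hhd.2.1⟩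
  have hg : g ∈ Jset R := ⟨hgm.1, hgm.2.1⟩
  have hsub := div_sub (Jcomp_mem_Jset hh hg) (Jcomp_mem_Jset hg hh) (Komm_mem_Jset h g)
    (Komm_eq hh hg) (m + d) (by omega) ?_ (m + d + 1) (by omega) (by omega)
  · have hbd := coeff_Jcomp_boundary hd hm hhd hgm
    rw [show d + m + 1 = m + d + 1 from by omega] at hbd
    rw [hsub, coeff_Jcomp_boundary hm hd hgm hhd, hbd]
    abel
  · intro j h2 hj
    rw [coeff_Jcomp_add hd hm hhd hgm j h2 (by omega),
      coeff_Jcomp_add hm hd hgm hhd j h2 (by omega), add_comm]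

lemma X_mem_Jset : (X : PowerSeries R) ∈ Jset R :=
  ⟨by rw [coeff_X, if_neg (by omega)], by rw [coeff_X, if_pos rfl]⟩

lemma Dge_X_add_monomial (m : ℕ) (hm : 1 ≤ m) (b : R) :
    Dge m ((X : PowerSeries R) + monomial (R := R) (m + 1) b) := by
  refine ⟨?_, ?_, fun i h2 hi => ?_⟩
  · rw [map_add, coeff_X, if_neg (by omega), coeff_monomial, if_neg (by omega), add_zero]
  · rw [map_add, coeff_X, if_pos rfl, coeff_monomial, if_neg (by omega), add_zero]
  · rw [map_add, coeff_X, if_neg (by omega), coeff_monomial, if_neg (by omega), add_zero]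

lemma coeff_X_add_monomial (m : ℕ) (hm : 1 ≤ m) (b : R) :
    coeff (R := R) (m + 1) ((X : PowerSeries R) + monomial (R := R) (m + 1) b) = b := by
  rw [map_add, coeff_X, if_neg (by omega), coeff_monomial, if_pos rfl, zero_add]

section PsetSec

/-- Coefficients achievable as exact leading coefficient at depth `d` by elements of `H`. -/
def Pset (H : Set (PowerSeries R)) (d : ℕ) : Set R :=
  {b | ∃ w ∈ H, Dge d w ∧ coeff (R := R) (d + 1) w = b}

variable {H : Set (PowerSeries R)}
variable (hsub : H ⊆ Jset R) (hx : (X : PowerSeries R) ∈ H)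
  (hmul : ∀ f ∈ H, ∀ g ∈ H, Jcomp f g ∈ H)
  (hld : ∀ f ∈ H, ∀ g ∈ H, ∀ w ∈ Jset R, Jcomp f w = g → w ∈ H)
  (hnorm : ∀ f ∈ Jset R, ∀ h ∈ H, ∀ w ∈ Jset R,
      Jcomp (Jcomp h f) w = Jcomp f h → w ∈ H)

include hsub hx hmul hld hnorm

lemma Pset_zero (d : ℕ) (hd : 1 ≤ d) : (0 : R) ∈ Pset H d :=
  ⟨X, hx, Dge_X d, by rw [coeff_X, if_neg (by omega)]⟩

lemma Pset_add {d : ℕ} (hd : 1 ≤ d) {a b : R} (ha : a ∈ Pset H d) (hb : b ∈ Pset H d) :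
    a + b ∈ Pset H d := by
  obtain ⟨w1, hw1H, hw1d, hw1c⟩ := ha
  obtain ⟨w2, hw2H, hw2d, hw2c⟩ := hb
  refine ⟨Jcomp w1 w2, hmul w1 hw1H w2 hw2H, ⟨Jcomp_coeff_zero w1 w2,
    Jcomp_coeff_one w1 w2 hw1d.2.1 hw2d.2.1, fun i h2 hi => ?_⟩, ?_⟩
  · rw [coeff_Jcomp_add hd hd hw1d hw2d i h2 (by omega), hw1d.2.2 i h2 hi,
      hw2d.2.2 i h2 hi, add_zero]
  · rw [coeff_Jcomp_add hd hd hw1d hw2d (d + 1) (by omega) (by omega), hw1c, hw2c]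

lemma Pset_neg {d : ℕ} (hd : 1 ≤ d) {a : R} (ha : a ∈ Pset H d) : -a ∈ Pset H d := by
  obtain ⟨w, hwH, hwd, hwc⟩ := ha
  have hwJ : w ∈ Jset R := hsub hwH
  have hweq : Jcomp w (ldiv w X) = X := Jcomp_ldiv hwJ X_mem_Jset
  have hagree : ∀ j, 2 ≤ j → j ≤ d → coeff (R := R) j w = coeff (R := R) j (X : PowerSeries R) :=
    fun j h2 hj => by rw [hwd.2.2 j h2 hj, coeff_X, if_neg (by omega)]
  refine ⟨ldiv w X, hld w hwH X hx (ldiv w X) (ldiv_mem_Jset w X) hweq,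
    div_dge hwJ X_mem_Jset (ldiv_mem_Jset w X) hweq d hd hagree, ?_⟩
  rw [div_sub hwJ X_mem_Jset (ldiv_mem_Jset w X) hweq d hd hagree (d + 1)
    (by omega) (by omega), hwc, coeff_X, if_neg (by omega), zero_sub]

lemma Pset_sub {d : ℕ} (hd : 1 ≤ d) {a b : R} (ha : a ∈ Pset H d) (hb : b ∈ Pset H d) :
    a - b ∈ Pset H d := by
  rw [sub_eq_add_neg]
  exact Pset_add hsub hx hmul hld hnorm hd ha (Pset_neg hsub hx hmul hld hnorm hd hb)

lemma Pset_nsmul {d : ℕ} (hd : 1 ≤ d) {a : R} (ha : a ∈ Pset H d) (n : ℕ) :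
    n • a ∈ Pset H d := by
  induction n with
  | zero => rw [zero_smul]; exact Pset_zero hsub hx hmul hld hnorm d hd
  | succ n ih => rw [succ_nsmul]; exact Pset_add hsub hx hmul hld hnorm hd ih ha

/-- The commutator construction inside `Pset`. -/
lemma Pset_komm {d : ℕ} (hd : 1 ≤ d) {dl : R} (hdl : dl ∈ Pset H d)
    (m : ℕ) (hm : 1 ≤ m) (b : R) :
    (m + 1) • (b * dl) - (d + 1) • (dl * b) ∈ Pset H (m + d) := by
  obtain ⟨h, hhH, hhd, hhc⟩ := hdl
  have hhJ : h ∈ Jset R := hsub hhH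
  set g : PowerSeries R := X + monomial (R := R) (m + 1) b with hg
  have hgd : Dge m g := Dge_X_add_monomial m hm b
  have hgJ : g ∈ Jset R := ⟨hgd.1, hgd.2.1⟩
  refine ⟨Komm h g, hnorm g hgJ h hhH (Komm h g) (Komm_mem_Jset h g) (Komm_eq hhJ hgJ),
    Komm_dge hm hd hgd hhd, ?_⟩
  rw [Komm_coeff_top hm hd hgd hhd, hhc, coeff_X_add_monomial m hm b,
    mul_smul_comm, mul_smul_comm]

variable (K : Type*) [Field K] [CharZero K] [Algebra K R]

omit hsub hx hmul hld hnorm in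
lemma nu_cancel_z (N : ℤ) (hN : N ≠ 0) (x : R) :
    N • ((algebraMap K R ((N : K)⁻¹)) * x) = x := by
  rw [zsmul_eq_mul, ← mul_assoc, ← map_intCast (algebraMap K R) N, ← map_mul,
    mul_inv_cancel₀ (by exact_mod_cast hN), map_one, one_mul]

lemma Pset_zsmul {d : ℕ} (hd : 1 ≤ d) {a : R} (ha : a ∈ Pset H d) (n : ℤ) :
    n • a ∈ Pset H d := by
  induction n using Int.induction_on with
  | zero => rw [zero_smul]; exact Pset_zero hsub hx hmul hld hnorm d hd
  | succ k ih => rw [add_smul, one_smul]; exact Pset_add hsub hx hmul hld hnorm hd ih ha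
  | pred k ih => rw [sub_smul, one_smul]; exact Pset_sub hsub hx hmul hld hnorm hd ih ha

lemma Pset_komm_z {d : ℕ} (hd : 1 ≤ d) {dl : R} (hdl : dl ∈ Pset H d)
    (m : ℕ) (hm : 1 ≤ m) (b : R) :
    ((m : ℤ) + 1) • (b * dl) - ((d : ℤ) + 1) • (dl * b) ∈ Pset H (m + d) := by
  have h := Pset_komm hsub hx hmul hld hnorm hd hdl m hm b
  have he : ((m : ℤ) + 1) • (b * dl) - ((d : ℤ) + 1) • (dl * b) =
      (m + 1) • (b * dl) - (d + 1) • (dl * b) := by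
    rw [← natCast_zsmul, ← natCast_zsmul]; push_cast; ring_nf
  rwa [he]

include K in
/-- The key "sandwich" lemma: if `dl` is achievable at depth `d ≥ 1`, then all
`x * dl * y` are achievable at any depth `d + e + 1` with `e ≥ 1`. -/
lemma Pset_sand {d : ℕ} (hd : 1 ≤ d) {dl : R} (hdl : dl ∈ Pset H d)
    {e : ℕ} (he : 1 ≤ e) (x y : R) : x * (dl * y) ∈ Pset H (d + e + 1) := by
  obtain ⟨p, rfl⟩ : ∃ p, d = p + 1 := ⟨d - 1, by omega⟩
  obtain ⟨q, rfl⟩ : ∃ q, e = q + 1 := ⟨e - 1, by omega⟩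
  rw [show p + 1 + (q + 1) + 1 = p + q + 3 from by omega]
  set ν : K →+* R := algebraMap K R with hnu
  set E : R → R := fun b => ((q : ℤ) + 2) • (b * dl) - ((p : ℤ) + 2) • (dl * b)
    with hEdef
  have hE : ∀ b : R, E b ∈ Pset H (p + q + 2) := by
    intro b
    have h := Pset_komm_z hsub hx hmul hld hnorm (by omega : 1 ≤ p + 1) hdl (q + 1)
      (by omega) b
    rw [show q + 1 + (p + 1) = p + q + 2 from by omega] at h
    have he2 : (((q + 1 : ℕ) : ℤ) + 1) • (b * dl) - (((p + 1 : ℕ) : ℤ) + 1) • (dl * b)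
        = E b := by rw [hEdef]; push_cast; module
    rwa [he2] at h
  have hC : ∀ b : R, ((q : ℤ) + 3) • (b * dl) - ((p : ℤ) + 2) • (dl * b) ∈
      Pset H (p + q + 3) := by
    intro b
    have h := Pset_komm_z hsub hx hmul hld hnorm (by omega : 1 ≤ p + 1) hdl (q + 2)
      (by omega) b
    rw [show q + 2 + (p + 1) = p + q + 3 from by omega] at h
    have he2 : (((q + 2 : ℕ) : ℤ) + 1) • (b * dl) - (((p + 1 : ℕ) : ℤ) + 1) • (dl * b)
        = ((q : ℤ) + 3) • (b * dl) - ((p : ℤ) + 2) • (dl * b) := by push_cast; module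
    rwa [he2] at h
  have hB : ∀ c b : R, (2 : ℤ) • (c * E b) - ((p : ℤ) + (q : ℤ) + 3) • (E b * c) ∈
      Pset H (p + q + 3) := by
    intro c b
    have h := Pset_komm_z hsub hx hmul hld hnorm (by omega : 1 ≤ p + q + 2) (hE b) 1
      (by omega) c
    rw [show 1 + (p + q + 2) = p + q + 3 from by omega] at h
    have he2 : (((1 : ℕ) : ℤ) + 1) • (c * E b) - (((p + q + 2 : ℕ) : ℤ) + 1) • (E b * c)
        = (2 : ℤ) • (c * E b) - ((p : ℤ) + (q : ℤ) + 3) • (E b * c) := by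
      push_cast; module
    rwa [he2] at h
  have hE3 : ∀ b : R, E b ∈ Pset H (p + q + 3) := by
    intro b
    have hN0 : -((p : ℤ) + (q : ℤ) + 1) ≠ 0 := by omega
    have h := hB (ν ((((-((p : ℤ) + (q : ℤ) + 1)) : ℤ) : K)⁻¹)) b
    rw [show E b * ν ((((-((p : ℤ) + (q : ℤ) + 1)) : ℤ) : K)⁻¹) =
        ν ((((-((p : ℤ) + (q : ℤ) + 1)) : ℤ) : K)⁻¹) * E b from
        (Algebra.commutes _ _).symm] at h
    have he2 : (2 : ℤ) • (ν ((((-((p : ℤ) + (q : ℤ) + 1)) : ℤ) : K)⁻¹) * E b) -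
        ((p : ℤ) + (q : ℤ) + 3) • (ν ((((-((p : ℤ) + (q : ℤ) + 1)) : ℤ) : K)⁻¹) * E b) =
        (-((p : ℤ) + (q : ℤ) + 1)) •
          (ν ((((-((p : ℤ) + (q : ℤ) + 1)) : ℤ) : K)⁻¹) * E b) := by module
    rw [he2, nu_cancel_z K (-((p : ℤ) + (q : ℤ) + 1)) hN0 (E b)] at h
    exact h
  have hbd : ∀ b : R, b * dl ∈ Pset H (p + q + 3) := by
    intro b
    have h := Pset_sub hsub hx hmul hld hnorm (by omega : 1 ≤ p + q + 3) (hC b) (hE3 b)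
    have he2 : (((q : ℤ) + 3) • (b * dl) - ((p : ℤ) + 2) • (dl * b)) - E b = b * dl := by
      rw [hEdef]; module
    rwa [he2] at h
  have hdb : ∀ b : R, dl * b ∈ Pset H (p + q + 3) := by
    have h1 : ∀ b : R, ((p : ℤ) + 2) • (dl * b) ∈ Pset H (p + q + 3) := by
      intro b
      have h := Pset_sub hsub hx hmul hld hnorm (by omega : 1 ≤ p + q + 3)
        (hbd (((q : ℤ) + 3) • b)) (hC b)
      have he2 : ((((q : ℤ) + 3) • b) * dl) -
          (((q : ℤ) + 3) • (b * dl) - ((p : ℤ) + 2) • (dl * b)) =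
          ((p : ℤ) + 2) • (dl * b) := by rw [smul_mul_assoc]; module
      rwa [he2] at h
    intro b
    have hN0 : ((p : ℤ) + 2) ≠ 0 := by omega
    have h := h1 (ν (((((p : ℤ) + 2) : ℤ) : K)⁻¹) * b)
    rw [show dl * (ν (((((p : ℤ) + 2) : ℤ) : K)⁻¹) * b) =
        ν (((((p : ℤ) + 2) : ℤ) : K)⁻¹) * (dl * b) from by
        rw [← mul_assoc, ← Algebra.commutes, mul_assoc],
      nu_cancel_z K ((p : ℤ) + 2) hN0 (dl * b)] at h
    exact h
  have hU : ∀ c b : R,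
      ((2 : ℤ) * ((p : ℤ) + 2)) • (c * (dl * b)) +
        ((((p : ℤ) + (q : ℤ) + 3) * ((q : ℤ) + 2))) • (b * (dl * c)) ∈
        Pset H (p + q + 3) := by
    intro c b
    have h1 := hB c b
    have h2 := hbd (((2 : ℤ) * ((q : ℤ) + 2)) • (c * b))
    have h3 := hdb ((((p : ℤ) + (q : ℤ) + 3) * ((p : ℤ) + 2)) • (b * c))
    have h := Pset_sub hsub hx hmul hld hnorm (by omega : 1 ≤ p + q + 3)
      (Pset_add hsub hx hmul hld hnorm (by omega : 1 ≤ p + q + 3) h2 h3) h1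
    have he2 : ((((2 : ℤ) * ((q : ℤ) + 2)) • (c * b)) * dl +
          dl * ((((p : ℤ) + (q : ℤ) + 3) * ((p : ℤ) + 2)) • (b * c))) -
          ((2 : ℤ) • (c * E b) - ((p : ℤ) + (q : ℤ) + 3) • (E b * c)) =
          ((2 : ℤ) * ((p : ℤ) + 2)) • (c * (dl * b)) +
            ((((p : ℤ) + (q : ℤ) + 3) * ((q : ℤ) + 2))) • (b * (dl * c)) := by
      rw [hEdef]
      simp only [smul_mul_assoc, mul_smul_comm, mul_sub, sub_mul, smul_sub, mul_assoc]
      module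
    rwa [he2] at h
  have hp0 : (0 : ℤ) ≤ (p : ℤ) := Int.natCast_nonneg p
  have hq0 : (0 : ℤ) ≤ (q : ℤ) := Int.natCast_nonneg q
  have hkey : (2 : ℤ) * ((p : ℤ) + 2) < ((p : ℤ) + (q : ℤ) + 3) * ((q : ℤ) + 2) := by
    nlinarith
  have hsq := mul_self_lt_mul_self (by nlinarith : (0 : ℤ) ≤ (2 : ℤ) * ((p : ℤ) + 2)) hkey
  have hM0 : (((p : ℤ) + (q : ℤ) + 3) * ((q : ℤ) + 2)) *
      (((p : ℤ) + (q : ℤ) + 3) * ((q : ℤ) + 2)) -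
      ((2 : ℤ) * ((p : ℤ) + 2)) * ((2 : ℤ) * ((p : ℤ) + 2)) ≠ 0 := by omega
  set M : ℤ := (((p : ℤ) + (q : ℤ) + 3) * ((q : ℤ) + 2)) *
      (((p : ℤ) + (q : ℤ) + 3) * ((q : ℤ) + 2)) -
      ((2 : ℤ) * ((p : ℤ) + 2)) * ((2 : ℤ) * ((p : ℤ) + 2)) with hMdef
  have h1 := Pset_zsmul hsub hx hmul hld hnorm (by omega : 1 ≤ p + q + 3)
    (hU y (ν (((M : ℤ) : K)⁻¹) * x)) (((p : ℤ) + (q : ℤ) + 3) * ((q : ℤ) + 2))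
  have h2 := Pset_zsmul hsub hx hmul hld hnorm (by omega : 1 ≤ p + q + 3)
    (hU (ν (((M : ℤ) : K)⁻¹) * x) y) ((2 : ℤ) * ((p : ℤ) + 2))
  have h := Pset_sub hsub hx hmul hld hnorm (by omega : 1 ≤ p + q + 3) h1 h2
  have he2 : ((((p : ℤ) + (q : ℤ) + 3) * ((q : ℤ) + 2)) •
        (((2 : ℤ) * ((p : ℤ) + 2)) • (y * (dl * (ν (((M : ℤ) : K)⁻¹) * x))) +
          ((((p : ℤ) + (q : ℤ) + 3) * ((q : ℤ) + 2))) •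
            ((ν (((M : ℤ) : K)⁻¹) * x) * (dl * y)))) -
      (((2 : ℤ) * ((p : ℤ) + 2)) •
        (((2 : ℤ) * ((p : ℤ) + 2)) • ((ν (((M : ℤ) : K)⁻¹) * x) * (dl * y)) +
          ((((p : ℤ) + (q : ℤ) + 3) * ((q : ℤ) + 2))) •
            (y * (dl * (ν (((M : ℤ) : K)⁻¹) * x))))) =
      M • (ν (((M : ℤ) : K)⁻¹) * (x * (dl * y))) := by
    rw [hMdef]
    simp only [mul_assoc]
    module
  rw [he2, nu_cancel_z K M hM0 (x * (dl * y))] at h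
  exact h

include K in
/-- Fullness: with simplicity, every element of `R` is an achievable leading
coefficient at each depth `d + e + 1`, `e ≥ 1`. -/
lemma Pset_full (hsimple : ∀ I : TwoSidedIdeal R, I = ⊥ ∨ I = ⊤)
    {d : ℕ} (hd : 1 ≤ d) {dl : R} (hdl : dl ∈ Pset H d) (hdl0 : dl ≠ 0)
    {e : ℕ} (he : 1 ≤ e) (r : R) : r ∈ Pset H (d + e + 1) := by
  have hD : 1 ≤ d + e + 1 := by omega
  obtain ⟨Q, hQmem⟩ : ∃ Q : TwoSidedIdeal R, ∀ z : R,
      z ∈ Q ↔ ∀ x y : R, x * (z * y) ∈ Pset H (d + e + 1) := by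
    refine ⟨TwoSidedIdeal.mk' {z | ∀ x y : R, x * (z * y) ∈ Pset H (d + e + 1)}
      (fun x y => by
        rw [zero_mul, mul_zero]; exact Pset_zero hsub hx hmul hld hnorm _ hD)
      (fun {a b} ha hb x y => by
        rw [add_mul, mul_add]
        exact Pset_add hsub hx hmul hld hnorm hD (ha x y) (hb x y))
      (fun {a} ha x y => by
        rw [neg_mul, mul_neg]
        exact Pset_neg hsub hx hmul hld hnorm hD (ha x y))
      (fun {a b} hb x y => by
        rw [show x * (a * b * y) = (x * a) * (b * y) from by
          rw [mul_assoc a b y, ← mul_assoc x a (b * y)]]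
        exact hb (x * a) y)
      (fun {a b} ha x y => by
        rw [show x * (a * b * y) = x * (a * (b * y)) from by rw [mul_assoc a b y]]
        exact ha x (b * y)),
      fun z => TwoSidedIdeal.mem_mk' _ _ _ _ _ _ z⟩
  have hdlQ : dl ∈ Q := (hQmem dl).mpr
    (fun x y => Pset_sand hsub hx hmul hld hnorm K hd hdl he x y)
  rcases hsimple Q with hbot | htop
  · rw [hbot, TwoSidedIdeal.mem_bot] at hdlQ
    exact absurd hdlQ hdl0
  · have hr : r ∈ Q := by rw [htop]; simp
    simpa using (hQmem r).mp hr 1 1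

end PsetSec

lemma Jcomp_congr_left {h g g' : PowerSeries R} (hh : h ∈ Jset R) (hg : g ∈ Jset R)
    (hg' : g' ∈ Jset R) {t : ℕ} (hag : ∀ i < t, coeff (R := R) i g = coeff (R := R) i g') :
    ∀ j < t, coeff (R := R) j (Jcomp h g) = coeff (R := R) j (Jcomp h g') := by
  intro j hj
  rcases Nat.lt_or_ge j 2 with h2 | h2
  · interval_cases j
    · rw [Jcomp_coeff_zero, Jcomp_coeff_zero]
    · rw [Jcomp_coeff_one h g hh.2 hg.2, Jcomp_coeff_one h g' hh.2 hg'.2]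
  · obtain ⟨s, rfl⟩ : ∃ s, j = s + 2 := ⟨j - 2, by omega⟩
    rw [coeff_Jcomp_eq h g hh.2 hg.1 hg.2 s, coeff_Jcomp_eq h g' hh.2 hg'.1 hg'.2 s,
      hag (s + 2) hj]
    congr 1
    refine Finset.sum_congr rfl fun m hm => ?_
    rw [Finset.mem_Ico] at hm
    rw [coeff_pow_congr g g' hg.1 hg'.1 (t - 1) (fun i hi => hag i (by omega))
      (m + 1) (s + 2) (by omega)]

/-- Locality and top-coefficient affinity for the commutator in its first
(variable) argument. -/
lemma Komm_congr {h g g' : PowerSeries R} {d t : ℕ} (hd : 1 ≤ d) (ht : 2 ≤ t)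
    (hh : Dge d h) (hgJ : g ∈ Jset R) (hgJ' : g' ∈ Jset R)
    (hag : ∀ i < t, coeff (R := R) i g = coeff (R := R) i g') :
    ∀ K ≤ t + d, coeff (R := R) K (Komm h g) = coeff (R := R) K (Komm h g') +
      (if K = t + d then
        (t • ((coeff (R := R) t g - coeff (R := R) t g') * coeff (R := R) (d + 1) h) -
         (d + 1) • (coeff (R := R) (d + 1) h * (coeff (R := R) t g - coeff (R := R) t g'))) else 0) := by
  obtain ⟨t2, rfl⟩ : ∃ t2, t = t2 + 2 := ⟨t - 2, by omega⟩
  have hhJ : h ∈ Jset R := ⟨hh.1, hh.2.1⟩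
  have hwJ : Komm h g ∈ Jset R := Komm_mem_Jset h g
  have hwJ' : Komm h g' ∈ Jset R := Komm_mem_Jset h g'
  have hwD : Dge (1 + d) (Komm h g) := Komm_dge (le_refl 1) hd (Dge_one_iff.mpr hgJ) hh
  have hwD' : Dge (1 + d) (Komm h g') := Komm_dge (le_refl 1) hd (Dge_one_iff.mpr hgJ') hh
  intro K
  induction K using Nat.strong_induction_on with
  | _ K ih =>
    intro hK
    rcases Nat.lt_or_ge K 2 with h2 | h2
    · rw [if_neg (by omega), add_zero]
      interval_cases K
      · rw [hwJ.1, hwJ'.1]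
      · rw [hwJ.2, hwJ'.2]
    obtain ⟨s, rfl⟩ : ∃ s, K = s + 2 := ⟨K - 2, by omega⟩
    have hwag : ∀ i ≤ s + 1, coeff (R := R) i (Komm h g) = coeff (R := R) i (Komm h g') := by
      intro i hi
      have hI := ih i (by omega) (by omega)
      rwa [if_neg (by omega), add_zero] at hI
    -- the division cross-sums agree
    have hM : ∑ m ∈ Ico 1 (s + 1),
        coeff (R := R) (m + 1) (Jcomp h g) * coeff (R := R) (s + 2) ((Komm h g) ^ (m + 1)) =
        ∑ m ∈ Ico 1 (s + 1),
        coeff (R := R) (m + 1) (Jcomp h g') * coeff (R := R) (s + 2) ((Komm h g') ^ (m + 1)) := by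
      refine Finset.sum_congr rfl fun m hm => ?_
      rw [Finset.mem_Ico] at hm
      rcases Nat.lt_or_ge (m + 1) (t2 + 2) with hmt | hmt
      · rw [Jcomp_congr_left hhJ hgJ hgJ' hag (m + 1) (by omega),
          coeff_pow_congr (Komm h g) (Komm h g') hwJ.1 hwJ'.1 (s + 1) hwag
            (m + 1) (s + 2) (by omega)]
      · have hz : coeff (R := R) (s + 2) ((Komm h g) ^ (m + 1)) = 0 := by
          rw [coeff_pow_congr (Komm h g) X hwJ.1 (by simp) (1 + d)
            (hwD.coeff_eq_X) (m + 1) (s + 2) (by omega), coeff_X_pow,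
            if_neg (by omega)]
        have hz' : coeff (R := R) (s + 2) ((Komm h g') ^ (m + 1)) = 0 := by
          rw [coeff_pow_congr (Komm h g') X hwJ'.1 (by simp) (1 + d)
            (hwD'.coeff_eq_X) (m + 1) (s + 2) (by omega), coeff_X_pow,
            if_neg (by omega)]
        rw [hz, hz', mul_zero, mul_zero]
    -- expansion identities
    have hw1 := coeff_Jcomp_eq (Jcomp h g) (Komm h g) (Jcomp_mem_Jset hhJ hgJ).2
      hwJ.1 hwJ.2 s
    rw [Komm_eq hhJ hgJ] at hw1
    have hw2 := coeff_Jcomp_eq (Jcomp h g') (Komm h g') (Jcomp_mem_Jset hhJ hgJ').2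
      hwJ'.1 hwJ'.2 s
    rw [Komm_eq hhJ hgJ'] at hw2
    have e1 : coeff (R := R) (s + 2) (Komm h g) = coeff (R := R) (s + 2) (Jcomp g h) -
        coeff (R := R) (s + 2) (Jcomp h g) -
        ∑ m ∈ Ico 1 (s + 1),
          coeff (R := R) (m + 1) (Jcomp h g) * coeff (R := R) (s + 2) ((Komm h g) ^ (m + 1)) := by
      rw [eq_sub_iff_add_eq, eq_sub_iff_add_eq, hw1]; abel
    have e2 : coeff (R := R) (s + 2) (Komm h g') = coeff (R := R) (s + 2) (Jcomp g' h) -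
        coeff (R := R) (s + 2) (Jcomp h g') -
        ∑ m ∈ Ico 1 (s + 1),
          coeff (R := R) (m + 1) (Jcomp h g') * coeff (R := R) (s + 2) ((Komm h g') ^ (m + 1)) := by
      rw [eq_sub_iff_add_eq, eq_sub_iff_add_eq, hw2]; abel
    rcases Nat.lt_or_ge (s + 2) (t2 + 2 + d) with hKlt | hKge
    · -- low case : everything matches
      rw [if_neg (by omega), add_zero, e1, e2, hM]
      have hS1 : ∑ m ∈ Ico 1 (s + 1), coeff (R := R) (m + 1) g * coeff (R := R) (s + 2) (h ^ (m + 1)) =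
          ∑ m ∈ Ico 1 (s + 1), coeff (R := R) (m + 1) g' * coeff (R := R) (s + 2) (h ^ (m + 1)) := by
        refine Finset.sum_congr rfl fun m hm => ?_
        rw [Finset.mem_Ico] at hm
        rcases Nat.lt_or_ge (m + 1) (t2 + 2) with hmt | hmt
        · rw [hag (m + 1) (by omega)]
        · have hz : coeff (R := R) (s + 2) (h ^ (m + 1)) = 0 := by
            rw [coeff_pow_congr h X hh.1 (by simp) d (hh.coeff_eq_X) (m + 1) (s + 2)
              (by omega), coeff_X_pow, if_neg (by omega)]
          rw [hz, mul_zero, mul_zero]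
      have hS2 : ∑ m ∈ Ico 1 (s + 1), coeff (R := R) (m + 1) h * coeff (R := R) (s + 2) (g ^ (m + 1)) =
          ∑ m ∈ Ico 1 (s + 1), coeff (R := R) (m + 1) h * coeff (R := R) (s + 2) (g' ^ (m + 1)) := by
        refine Finset.sum_congr rfl fun m hm => ?_
        rw [Finset.mem_Ico] at hm
        rcases Nat.lt_or_ge (m + 1) (d + 1) with hmd | hmd
        · rw [hh.2.2 (m + 1) (by omega) (by omega), zero_mul, zero_mul]
        · rw [coeff_pow_congr g g' hgJ.1 hgJ'.1 (t2 + 1)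
            (fun i hi => hag i (by omega)) (m + 1) (s + 2) (by omega)]
      rw [coeff_Jcomp_eq g h hgJ.2 hhJ.1 hh.2.1 s,
        coeff_Jcomp_eq h g hhJ.2 hgJ.1 hgJ.2 s,
        coeff_Jcomp_eq g' h hgJ'.2 hhJ.1 hh.2.1 s,
        coeff_Jcomp_eq h g' hhJ.2 hgJ'.1 hgJ'.2 s,
        hS1, hS2]
      abel
    -- top case : s + 2 = t2 + 2 + d
    have hKeq : s + 2 = t2 + 2 + d := by omega
    rw [if_pos hKeq, e1, e2, hM]
    -- S1 correction
    have hht : coeff (R := R) (s + 2) (h ^ (t2 + 2)) = (t2 + 2) • coeff (R := R) (d + 1) h := by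
      have h3 := coeff_pow_top h X hh.1 (by simp) hh.2.1 (by simp) (d + 1)
        (by omega) (fun i hi => hh.coeff_eq_X i (by omega)) (t2 + 1)
      rw [show d + 1 + (t2 + 1) = s + 2 from by omega] at h3
      rw [h3, coeff_X_pow, if_neg (by omega), coeff_X, if_neg (by omega), sub_zero,
        zero_add]
    have hS1 : ∑ m ∈ Ico 1 (s + 1), coeff (R := R) (m + 1) g * coeff (R := R) (s + 2) (h ^ (m + 1)) =
        (∑ m ∈ Ico 1 (s + 1), coeff (R := R) (m + 1) g' * coeff (R := R) (s + 2) (h ^ (m + 1))) +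
        (coeff (R := R) (t2 + 2) g - coeff (R := R) (t2 + 2) g') * ((t2 + 2) • coeff (R := R) (d + 1) h) := by
      have key : ∀ m ∈ Ico 1 (s + 1),
          coeff (R := R) (m + 1) g * coeff (R := R) (s + 2) (h ^ (m + 1)) =
          coeff (R := R) (m + 1) g' * coeff (R := R) (s + 2) (h ^ (m + 1)) +
          (if m = t2 + 1 then
            (coeff (R := R) (t2 + 2) g - coeff (R := R) (t2 + 2) g') * ((t2 + 2) • coeff (R := R) (d + 1) h)
           else 0) := by
        intro m hm
        rw [Finset.mem_Ico] at hm
        rcases Nat.lt_or_ge (m + 1) (t2 + 2) with hmt | hmt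
        · rw [if_neg (by omega), add_zero, hag (m + 1) (by omega)]
        rcases Nat.eq_or_lt_of_le hmt with hme | hml
        · have hmeq : m = t2 + 1 := by omega
          rw [if_pos hmeq, hmeq, hht, sub_mul]
          abel
        · have hz : coeff (R := R) (s + 2) (h ^ (m + 1)) = 0 := by
            rw [coeff_pow_congr h X hh.1 (by simp) d (hh.coeff_eq_X) (m + 1) (s + 2)
              (by omega), coeff_X_pow, if_neg (by omega)]
          rw [if_neg (by omega), add_zero, hz, mul_zero, mul_zero]
      rw [Finset.sum_congr rfl key, Finset.sum_add_distrib,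
        Finset.sum_ite_eq' _ (t2 + 1), if_pos (by rw [Finset.mem_Ico]; omega)]
    -- S2 correction
    have hgt : coeff (R := R) (s + 2) (g ^ (d + 1)) = coeff (R := R) (s + 2) (g' ^ (d + 1)) +
        (d + 1) • (coeff (R := R) (t2 + 2) g - coeff (R := R) (t2 + 2) g') := by
      have h3 := coeff_pow_top g g' hgJ.1 hgJ'.1 hgJ.2 hgJ'.2 (t2 + 2) (by omega) hag d
      rw [show t2 + 2 + d = s + 2 from by omega] at h3
      exact h3
    have hS2 : ∑ m ∈ Ico 1 (s + 1), coeff (R := R) (m + 1) h * coeff (R := R) (s + 2) (g ^ (m + 1)) =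
        (∑ m ∈ Ico 1 (s + 1), coeff (R := R) (m + 1) h * coeff (R := R) (s + 2) (g' ^ (m + 1))) +
        coeff (R := R) (d + 1) h *
          ((d + 1) • (coeff (R := R) (t2 + 2) g - coeff (R := R) (t2 + 2) g')) := by
      have key : ∀ m ∈ Ico 1 (s + 1),
          coeff (R := R) (m + 1) h * coeff (R := R) (s + 2) (g ^ (m + 1)) =
          coeff (R := R) (m + 1) h * coeff (R := R) (s + 2) (g' ^ (m + 1)) +
          (if m = d then coeff (R := R) (d + 1) h *
            ((d + 1) • (coeff (R := R) (t2 + 2) g - coeff (R := R) (t2 + 2) g')) else 0) := by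
        intro m hm
        rw [Finset.mem_Ico] at hm
        rcases Nat.lt_or_ge (m + 1) (d + 1) with hmd | hmd
        · rw [if_neg (by omega), add_zero, hh.2.2 (m + 1) (by omega) (by omega),
            zero_mul, zero_mul]
        rcases Nat.eq_or_lt_of_le hmd with hme | hml
        · have hmeq : m = d := by omega
          rw [if_pos hmeq, hmeq, hgt, mul_add]
        · rw [if_neg (by omega), add_zero,
            coeff_pow_congr g g' hgJ.1 hgJ'.1 (t2 + 1)
              (fun i hi => hag i (by omega)) (m + 1) (s + 2) (by omega)]
      rw [Finset.sum_congr rfl key, Finset.sum_add_distrib,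
        Finset.sum_ite_eq' _ d, if_pos (by rw [Finset.mem_Ico]; omega)]
    rw [coeff_Jcomp_eq g h hgJ.2 hhJ.1 hh.2.1 s,
      coeff_Jcomp_eq h g hhJ.2 hgJ.1 hgJ.2 s,
      coeff_Jcomp_eq g' h hgJ'.2 hhJ.1 hh.2.1 s,
      coeff_Jcomp_eq h g' hhJ.2 hgJ'.1 hgJ'.2 s,
      hS1, hS2, mul_smul_comm, mul_smul_comm]
    abel

lemma Jcomp_cmp1 {u u' v : PowerSeries R} (hu : u ∈ Jset R) (hu' : u' ∈ Jset R)
    (hv : v ∈ Jset R) {k : ℕ} (hk : 2 ≤ k)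
    (hag : ∀ i < k, coeff (R := R) i u = coeff (R := R) i u') :
    coeff (R := R) k (Jcomp u v) = coeff (R := R) k (Jcomp u' v) + (coeff (R := R) k u - coeff (R := R) k u') := by
  obtain ⟨s, rfl⟩ : ∃ s, k = s + 2 := ⟨k - 2, by omega⟩
  rw [coeff_Jcomp_eq u v hu.2 hv.1 hv.2 s, coeff_Jcomp_eq u' v hu'.2 hv.1 hv.2 s]
  have hmid : ∑ m ∈ Ico 1 (s + 1), coeff (R := R) (m + 1) u * coeff (R := R) (s + 2) (v ^ (m + 1)) =
      ∑ m ∈ Ico 1 (s + 1), coeff (R := R) (m + 1) u' * coeff (R := R) (s + 2) (v ^ (m + 1)) := by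
    refine Finset.sum_congr rfl fun m hm => ?_
    rw [Finset.mem_Ico] at hm
    rw [hag (m + 1) (by omega)]
  rw [hmid]; abel

lemma Jcomp_cmp2 {u v v' : PowerSeries R} (hu : u ∈ Jset R) (hv : v ∈ Jset R)
    (hv' : v' ∈ Jset R) {k : ℕ} (hk : 2 ≤ k)
    (hag : ∀ i < k, coeff (R := R) i v = coeff (R := R) i v') :
    coeff (R := R) k (Jcomp u v) = coeff (R := R) k (Jcomp u v') + (coeff (R := R) k v - coeff (R := R) k v') := by
  obtain ⟨s, rfl⟩ : ∃ s, k = s + 2 := ⟨k - 2, by omega⟩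
  rw [coeff_Jcomp_eq u v hu.2 hv.1 hv.2 s, coeff_Jcomp_eq u v' hu.2 hv'.1 hv'.2 s]
  have hmid : ∑ m ∈ Ico 1 (s + 1), coeff (R := R) (m + 1) u * coeff (R := R) (s + 2) (v ^ (m + 1)) =
      ∑ m ∈ Ico 1 (s + 1), coeff (R := R) (m + 1) u * coeff (R := R) (s + 2) (v' ^ (m + 1)) := by
    refine Finset.sum_congr rfl fun m hm => ?_
    rw [Finset.mem_Ico] at hm
    rw [coeff_pow_congr v v' hv.1 hv'.1 (s + 1) (fun i hi => hag i (by omega))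
      (m + 1) (s + 2) (by omega)]
  rw [hmid]; abel

section Solve

/-- The two unknown-parameter series. -/
noncomputable def gser1 (b : ℕ → R × R) : PowerSeries R :=
  PowerSeries.mk fun i => if i = 1 then 1 else if 2 ≤ i then (b (i - 2)).1 else 0

noncomputable def gser2 (b : ℕ → R × R) : PowerSeries R :=
  PowerSeries.mk fun i => if i = 1 then 1 else if 2 ≤ i then (b (i - 1)).2 else 0

/-- The composite window `[g₁,h₁] ∘ [g₂,h₂]`. -/
noncomputable def Wser (h1 h2 : PowerSeries R) (b : ℕ → R × R) : PowerSeries R :=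
  Jcomp (Komm h1 (gser1 b)) (Komm h2 (gser2 b))

lemma gser1_mem_Jset (b : ℕ → R × R) : gser1 b ∈ Jset R := by
  constructor
  · rw [gser1, coeff_mk]; norm_num
  · rw [gser1, coeff_mk]; norm_num

lemma gser2_mem_Jset (b : ℕ → R × R) : gser2 b ∈ Jset R := by
  constructor
  · rw [gser2, coeff_mk]; norm_num
  · rw [gser2, coeff_mk]; norm_num

lemma gser1_coeff (b : ℕ → R × R) (j : ℕ) : coeff (R := R) (j + 2) (gser1 b) = (b j).1 := by
  rw [gser1, coeff_mk, if_neg (by omega), if_pos (by omega), Nat.add_sub_cancel]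

lemma gser2_coeff (b : ℕ → R × R) (j : ℕ) : coeff (R := R) (j + 2) (gser2 b) = (b (j + 1)).2 := by
  rw [gser2, coeff_mk, if_neg (by omega), if_pos (by omega)]
  norm_num

lemma gser1_congr {b b' : ℕ → R × R} {j : ℕ} (hb : ∀ i, i < j → b i = b' i) :
    ∀ i < j + 2, coeff (R := R) i (gser1 b) = coeff (R := R) i (gser1 b') := by
  intro i hi
  rw [gser1, gser1, coeff_mk, coeff_mk]
  rcases Nat.lt_or_ge i 2 with h2 | h2
  · interval_cases i <;> norm_num
  · have hb' : b (i - 2) = b' (i - 2) := hb _ (by omega)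
    rw [if_neg (by omega : ¬ i = 1), if_neg (by omega : ¬ i = 1), if_pos h2, if_pos h2, hb']

lemma gser2_congr {b b' : ℕ → R × R} {j : ℕ} (hb : ∀ i, i < j → b i = b' i) :
    ∀ i < j + 1, coeff (R := R) i (gser2 b) = coeff (R := R) i (gser2 b') := by
  intro i hi
  rw [gser2, gser2, coeff_mk, coeff_mk]
  rcases Nat.lt_or_ge i 2 with h2 | h2
  · interval_cases i <;> norm_num
  · have hb' : b (i - 1) = b' (i - 1) := hb _ (by omega)
    rw [if_neg (by omega : ¬ i = 1), if_neg (by omega : ¬ i = 1), if_pos h2, if_pos h2, hb']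

variable {h1 h2 : PowerSeries R} {n : ℕ}

lemma Wser_mem_Jset (hh1 : h1 ∈ Jset R) (hh2 : h2 ∈ Jset R) (b : ℕ → R × R) :
    Wser h1 h2 b ∈ Jset R :=
  Jcomp_mem_Jset (Komm_mem_Jset _ _) (Komm_mem_Jset _ _)

lemma Wser_low (hh1 : Dge (n + 2) h1) (hh2 : Dge (n + 3) h2) (b : ℕ → R × R) :
    ∀ i, 2 ≤ i → i ≤ n + 3 → coeff (R := R) i (Wser h1 h2 b) = 0 := by
  intro i h2i hi
  have hw1 : Dge (1 + (n + 2)) (Komm h1 (gser1 b)) :=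
    Komm_dge (le_refl 1) (by omega) (Dge_one_iff.mpr (gser1_mem_Jset b)) hh1
  have hw2 : Dge (1 + (n + 3)) (Komm h2 (gser2 b)) :=
    Komm_dge (le_refl 1) (by omega) (Dge_one_iff.mpr (gser2_mem_Jset b)) hh2
  rw [Wser, coeff_Jcomp_add (by omega) (by omega) hw1 hw2 i h2i (by omega),
    hw1.2.2 i h2i (by omega), hw2.2.2 i h2i (by omega), add_zero]

lemma Wser_loc (hh1 : Dge (n + 2) h1) (hh2 : Dge (n + 3) h2)
    {b b' : ℕ → R × R} {j : ℕ} (hb : ∀ i ≤ j, b i = b' i) :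
    ∀ k ≤ n + 4 + j, coeff (R := R) k (Wser h1 h2 b) = coeff (R := R) k (Wser h1 h2 b') := by
  have hh1J : h1 ∈ Jset R := ⟨hh1.1, hh1.2.1⟩
  have hh2J : h2 ∈ Jset R := ⟨hh2.1, hh2.2.1⟩
  have hg1 := gser1_congr (b := b) (b' := b') (j := j + 1) (fun i hi => hb i (by omega))
  have hg2 := gser2_congr (b := b) (b' := b') (j := j + 1) (fun i hi => hb i (by omega))
  have hw1 := Komm_congr (d := n + 2) (t := j + 3) (by omega) (by omega) hh1
    (gser1_mem_Jset b) (gser1_mem_Jset b') hg1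
  have hw2 := Komm_congr (d := n + 3) (t := j + 2) (by omega) (by omega) hh2
    (gser2_mem_Jset b) (gser2_mem_Jset b') hg2
  have hw1' : ∀ K ≤ n + 4 + j, coeff (R := R) K (Komm h1 (gser1 b)) =
      coeff (R := R) K (Komm h1 (gser1 b')) := by
    intro K hK
    have hI := hw1 K (by omega)
    rwa [if_neg (by omega), add_zero] at hI
  have hw2' : ∀ K ≤ n + 4 + j, coeff (R := R) K (Komm h2 (gser2 b)) =
      coeff (R := R) K (Komm h2 (gser2 b')) := by
    intro K hK
    have hI := hw2 K (by omega)
    rwa [if_neg (by omega), add_zero] at hI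
  intro k hk
  rcases Nat.lt_or_ge k 2 with h2k | h2k
  · interval_cases k
    · rw [(Wser_mem_Jset hh1J hh2J b).1, (Wser_mem_Jset hh1J hh2J b').1]
    · rw [(Wser_mem_Jset hh1J hh2J b).2, (Wser_mem_Jset hh1J hh2J b').2]
  · rw [Wser, Wser,
      Jcomp_cmp1 (Komm_mem_Jset h1 (gser1 b)) (Komm_mem_Jset h1 (gser1 b'))
        (Komm_mem_Jset h2 (gser2 b)) h2k (fun i hi => hw1' i (by omega)),
      hw1' k hk, sub_self, add_zero,
      Jcomp_cmp2 (Komm_mem_Jset h1 (gser1 b')) (Komm_mem_Jset h2 (gser2 b))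
        (Komm_mem_Jset h2 (gser2 b')) h2k (fun i hi => hw2' i (by omega)),
      hw2' k hk, sub_self, add_zero]

lemma Wser_aff1 (hh1 : Dge (n + 2) h1) (hh2 : Dge (n + 3) h2)
    (hc1 : coeff (R := R) (n + 3) h1 = 1)
    {b b' : ℕ → R × R} {j : ℕ} (hb : ∀ i, i ≠ j → b i = b' i)
    (hb2 : (b j).2 = (b' j).2) :
    coeff (R := R) (n + 4 + j) (Wser h1 h2 b) = coeff (R := R) (n + 4 + j) (Wser h1 h2 b') +
      ((j + 2) • ((b j).1 - (b' j).1) - (n + 3) • ((b j).1 - (b' j).1)) := by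
  have hh1J : h1 ∈ Jset R := ⟨hh1.1, hh1.2.1⟩
  have hg2 : gser2 b = gser2 b' := by
    ext i
    rw [gser2, gser2, coeff_mk, coeff_mk]
    by_cases hij : i - 1 = j
    · have : (b (i - 1)).2 = (b' (i - 1)).2 := by rw [hij]; exact hb2
      rw [this]
    · rw [hb (i - 1) hij]
  have hg1 : ∀ i < j + 2, coeff (R := R) i (gser1 b) = coeff (R := R) i (gser1 b') :=
    gser1_congr (fun i hi => hb i (by omega))
  have hw1 := Komm_congr (d := n + 2) (t := j + 2) (by omega) (by omega) hh1
    (gser1_mem_Jset b) (gser1_mem_Jset b') hg1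
  have htop := hw1 (j + 2 + (n + 2)) (le_refl _)
  rw [if_pos rfl, gser1_coeff, gser1_coeff,
    show n + 2 + 1 = n + 3 from by norm_num, hc1, mul_one, one_mul,
    show j + 2 + (n + 2) = n + 4 + j from by omega] at htop
  have hag : ∀ K < n + 4 + j, coeff (R := R) K (Komm h1 (gser1 b)) =
      coeff (R := R) K (Komm h1 (gser1 b')) := by
    intro K hK
    have hI := hw1 K (by omega)
    rwa [if_neg (by omega), add_zero] at hI
  rw [Wser, Wser, hg2,
    Jcomp_cmp1 (Komm_mem_Jset h1 (gser1 b)) (Komm_mem_Jset h1 (gser1 b'))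
      (Komm_mem_Jset h2 (gser2 b')) (by omega) hag, htop]
  abel

lemma Wser_aff2 (hh1 : Dge (n + 2) h1) (hh2 : Dge (n + 3) h2)
    (hc2 : coeff (R := R) (n + 4) h2 = 1)
    {b b' : ℕ → R × R} {j : ℕ} (hj : 1 ≤ j) (hb : ∀ i, i ≠ j → b i = b' i)
    (hb1 : (b j).1 = (b' j).1) :
    coeff (R := R) (n + 4 + j) (Wser h1 h2 b) = coeff (R := R) (n + 4 + j) (Wser h1 h2 b') +
      ((j + 1) • ((b j).2 - (b' j).2) - (n + 4) • ((b j).2 - (b' j).2)) := by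
  have hh2J : h2 ∈ Jset R := ⟨hh2.1, hh2.2.1⟩
  have hg1 : gser1 b = gser1 b' := by
    ext i
    rw [gser1, gser1, coeff_mk, coeff_mk]
    by_cases hij : i - 2 = j
    · have : (b (i - 2)).1 = (b' (i - 2)).1 := by rw [hij]; exact hb1
      rw [this]
    · rw [hb (i - 2) hij]
  obtain ⟨j1, rfl⟩ : ∃ j1, j = j1 + 1 := ⟨j - 1, by omega⟩
  have hg2 : ∀ i < j1 + 2, coeff (R := R) i (gser2 b) = coeff (R := R) i (gser2 b') := by
    have := gser2_congr (b := b) (b' := b') (j := j1 + 1) (fun i hi => hb i (by omega))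
    exact fun i hi => this i (by omega)
  have hw2 := Komm_congr (d := n + 3) (t := j1 + 2) (by omega) (by omega) hh2
    (gser2_mem_Jset b) (gser2_mem_Jset b') hg2
  have htop := hw2 (j1 + 2 + (n + 3)) (le_refl _)
  rw [if_pos rfl, gser2_coeff, gser2_coeff,
    show n + 3 + 1 = n + 4 from by norm_num, hc2, mul_one, one_mul,
    show j1 + 2 + (n + 3) = n + 4 + (j1 + 1) from by omega] at htop
  have hag : ∀ K < n + 4 + (j1 + 1), coeff (R := R) K (Komm h2 (gser2 b)) =
      coeff (R := R) K (Komm h2 (gser2 b')) := by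
    intro K hK
    have hI := hw2 K (by omega)
    rwa [if_neg (by omega), add_zero] at hI
  rw [Wser, Wser, hg1,
    Jcomp_cmp2 (Komm_mem_Jset h1 (gser1 b')) (Komm_mem_Jset h2 (gser2 b))
      (Komm_mem_Jset h2 (gser2 b')) (by omega) hag, htop]
  have hidx : j1 + 1 + 1 = j1 + 2 := by norm_num
  rw [hidx]
  abel

noncomputable def solSeq (step : ℕ → (ℕ → R × R) → R × R) : ℕ → R × R
  | j => step j (fun i => if h : i < j then solSeq step i else 0)
  termination_by j => j
  decreasing_by exact h

lemma solSeq_eq (step : ℕ → (ℕ → R × R) → R × R) (j : ℕ) :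
    solSeq step j = step j (fun i => if i < j then solSeq step i else 0) := by
  have hfe : (fun i => if h : i < j then solSeq step i else 0) =
      (fun i => if i < j then solSeq step i else 0) := by
    funext i; exact dite_eq_ite
  rw [solSeq, hfe]

variable (K : Type*) [Field K] [CharZero K] [Algebra K R]

noncomputable def solStep (h1 h2 f : PowerSeries R) (n : ℕ) (j : ℕ)
    (prev : ℕ → R × R) : R × R :=
  if j = 0 then
    (algebraMap K R (((-((n : ℤ) + 1) : ℤ) : K)⁻¹) *
      (coeff (R := R) (n + 4 + j) f -
        coeff (R := R) (n + 4 + j) (Wser h1 h2 (fun i => if i < j then prev i else 0))), 0)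
  else
    (algebraMap K R ((((2 : ℤ) : ℤ) : K)⁻¹) *
      (coeff (R := R) (n + 4 + j) f -
        coeff (R := R) (n + 4 + j) (Wser h1 h2 (fun i => if i < j then prev i else 0))),
     -(algebraMap K R ((((2 : ℤ) : ℤ) : K)⁻¹) *
      (coeff (R := R) (n + 4 + j) f -
        coeff (R := R) (n + 4 + j) (Wser h1 h2 (fun i => if i < j then prev i else 0)))))

noncomputable def solB (h1 h2 f : PowerSeries R) (n : ℕ) : ℕ → R × R :=
  solSeq (solStep K h1 h2 f n)

include K in
lemma solve {H : Set (PowerSeries R)}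
    (hsub : H ⊆ Jset R)
    (hmul : ∀ f ∈ H, ∀ g ∈ H, Jcomp f g ∈ H)
    (hnorm : ∀ f ∈ Jset R, ∀ h ∈ H, ∀ w ∈ Jset R,
      Jcomp (Jcomp h f) w = Jcomp f h → w ∈ H)
    (hh1H : h1 ∈ H) (hh1 : Dge (n + 2) h1) (hc1 : coeff (R := R) (n + 3) h1 = 1)
    (hh2H : h2 ∈ H) (hh2 : Dge (n + 3) h2) (hc2 : coeff (R := R) (n + 4) h2 = 1)
    {f : PowerSeries R} (hf : Dge (n + 3) f) : f ∈ H := by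
  have hh1J : h1 ∈ Jset R := ⟨hh1.1, hh1.2.1⟩
  have hh2J : h2 ∈ Jset R := ⟨hh2.1, hh2.2.1⟩
  set b : ℕ → R × R := solB K h1 h2 f n with hbdef
  have hbj : ∀ j, b j = solStep K h1 h2 f n j (fun i => if i < j then b i else 0) :=
    fun j => solSeq_eq (solStep K h1 h2 f n) j
  have hlevel : ∀ j : ℕ, coeff (R := R) (n + 4 + j) (Wser h1 h2 b) = coeff (R := R) (n + 4 + j) f := by
    intro j
    set base : ℕ → R × R := fun i => if i < j then b i else 0 with hbase
    set γ : R := coeff (R := R) (n + 4 + j) f - coeff (R := R) (n + 4 + j) (Wser h1 h2 base)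
      with hgamma
    have htb : (fun i => if i < j then base i else 0) = base := by
      funext i
      by_cases hij : i < j
      · rw [if_pos hij]
      · rw [if_neg hij, hbase]
        simp only [if_neg hij]
    have hbase0 : ∀ i, ¬ i < j → base i = 0 := by
      intro i hij; rw [hbase]; simp only [if_neg hij]
    set u : ℕ → R × R := fun i => if i = j then b j else base i with hu
    have hloc : coeff (R := R) (n + 4 + j) (Wser h1 h2 b) =
        coeff (R := R) (n + 4 + j) (Wser h1 h2 u) := by
      refine Wser_loc hh1 hh2 (fun i hi => ?_) (n + 4 + j) (le_refl _)
      rcases Nat.lt_or_ge i j with h | h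
      · rw [hu]; simp only [if_neg (by omega : ¬ i = j)]
        rw [hbase]; simp only [if_pos h]
      · have hij : i = j := by omega
        rw [hij, hu]; simp only [eq_self_iff_true, if_true]
    rcases Nat.eq_zero_or_pos j with hj0 | hj1
    · -- j = 0 : only the first slot moves
      subst hj0
      have hb0 : b 0 = (algebraMap K R (((-((n : ℤ) + 1) : ℤ) : K)⁻¹) * γ, 0) := by
        rw [hbj 0, solStep, if_pos rfl, htb, ← hgamma]
      have haff := Wser_aff1 hh1 hh2 hc1 (b := u) (b' := base) (j := 0)
        (fun i hi => by rw [hu]; simp only [if_neg hi]) (by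
          rw [hu]; simp only [eq_self_iff_true, if_true]
          rw [hb0, hbase0 0 (by omega)]
          rfl)
      rw [hloc, haff, hu]
      simp only [eq_self_iff_true, if_true, hb0, hbase0 0 (by omega : ¬ (0:ℕ) < 0),
        Prod.fst_zero, Prod.snd_zero]
      have hN0 : (-((n : ℤ) + 1)) ≠ 0 := by omega
      have hmod : ∀ z : R, ((0 + 2) • (z - 0) - (n + 3) • (z - 0)) =
          (-((n : ℤ) + 1)) • z := by intro z; module
      rw [hmod, nu_cancel_z K (-((n : ℤ) + 1)) hN0 γ, hgamma]
      abel
    · -- j ≥ 1 : both slots move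
      set s : R := algebraMap K R ((((2 : ℤ) : ℤ) : K)⁻¹) * γ with hs
      have hbjv : b j = (s, -s) := by
        rw [hbj j, solStep, if_neg (by omega), htb, ← hgamma, hs]
      set mid : ℕ → R × R := fun i => if i = j then (s, 0) else base i with hmid
      have haff1 := Wser_aff1 hh1 hh2 hc1 (b := mid) (b' := base) (j := j)
        (fun i hi => by rw [hmid]; simp only [if_neg hi]) (by
          rw [hmid]; simp only [eq_self_iff_true, if_true]
          rw [hbase0 j (by omega)]
          rfl)
      have haff2 := Wser_aff2 hh1 hh2 hc2 (b := u) (b' := mid) (j := j) hj1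
        (fun i hi => by rw [hu, hmid]; simp only [if_neg hi]) (by
          rw [hu, hmid]; simp only [eq_self_iff_true, if_true]
          rw [hbjv])
      rw [hloc, haff2, haff1, hu, hmid]
      simp only [eq_self_iff_true, if_true, hbjv, hbase0 j (by omega : ¬ j < j),
        Prod.fst_zero, Prod.snd_zero]
      have hN0 : ((2 : ℤ)) ≠ 0 := by omega
      have hmod : ∀ z : R,
          (((j + 2) • (z - 0) - (n + 3) • (z - 0)) +
           ((j + 1) • (-z - 0) - (n + 4) • (-z - 0))) = (2 : ℤ) • z := by
        intro z; module
      rw [add_assoc, hmod, nu_cancel_z K (2 : ℤ) hN0 γ, hgamma]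
      abel
  -- conclude : the window equals f
  have hWf : Wser h1 h2 b = f := by
    ext k
    rcases Nat.lt_or_ge k (n + 4) with hk | hk
    · rcases Nat.lt_or_ge k 2 with h2k | h2k
      · interval_cases k
        · rw [(Wser_mem_Jset hh1J hh2J b).1, hf.1]
        · rw [(Wser_mem_Jset hh1J hh2J b).2, hf.2.1]
      · rw [Wser_low hh1 hh2 b k h2k (by omega), hf.2.2 k h2k (by omega)]
    · obtain ⟨j, rfl⟩ : ∃ j, k = n + 4 + j := ⟨k - (n + 4), by omega⟩
      exact hlevel j
  have hw1H : Komm h1 (gser1 b) ∈ H := hnorm (gser1 b) (gser1_mem_Jset b) h1 hh1H _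
    (Komm_mem_Jset _ _) (Komm_eq hh1J (gser1_mem_Jset b))
  have hw2H : Komm h2 (gser2 b) ∈ H := hnorm (gser2 b) (gser2_mem_Jset b) h2 hh2H _
    (Komm_mem_Jset _ _) (Komm_eq hh2J (gser2_mem_Jset b))
  have hWH := hmul _ hw1H _ hw2H
  rwa [show Jcomp (Komm h1 (gser1 b)) (Komm h2 (gser2 b)) = Wser h1 h2 b from rfl,
    hWf] at hWH


end Solve
end JLoop

open JLoop in
/-- If `R` is a simple unital associative algebra and `H` is a nontrivial subloop of
`𝒥(R)` with `[𝒥(R),H] ⊆ H`, then `𝒥_{n+2}(R) ⊆ H ⊆ 𝒥_n(R)` for some `n ≥ 1`. -/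
theorem statement12 (K : Type*) [Field K] [CharZero K]
    (R : Type*) [Ring R] [Algebra K R]
    (hsimple : ∀ I : TwoSidedIdeal R, I = ⊥ ∨ I = ⊤)
    (H : Set (PowerSeries R))
    (hHJ : H ⊆ Jset R) (hHt : (X : PowerSeries R) ∈ H)
    (hHmul : ∀ f ∈ H, ∀ g ∈ H, Jcomp f g ∈ H)
    (hHld : ∀ f ∈ H, ∀ g ∈ H, ∀ w ∈ Jset R, Jcomp f w = g → w ∈ H)
    (hHrd : ∀ f ∈ H, ∀ g ∈ H, ∀ w ∈ Jset R, Jcomp w g = f → w ∈ H)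
    (hnorm : ∀ f ∈ Jset R, ∀ h ∈ H, ∀ w ∈ Jset R,
      Jcomp (Jcomp h f) w = Jcomp f h → w ∈ H)
    (hnontriv : H ≠ {(X : PowerSeries R)}) :
    ∃ n : ℕ, 1 ≤ n ∧ JsetN R (n + 2) ⊆ H ∧ H ⊆ JsetN R n := by
  classical
  -- find a nontrivial element
  obtain ⟨h0, h0H, h0ne⟩ : ∃ h0 ∈ H, h0 ≠ X := by
    by_contra hcon
    push_neg at hcon
    exact hnontriv (Set.eq_singleton_iff_unique_mem.mpr ⟨hHt, fun y hy => hcon y hy⟩)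
  have hPex : ∃ i, 2 ≤ i ∧ ∃ h ∈ H, coeff (R := R) i h ≠ 0 := by
    by_contra hcon
    push_neg at hcon
    apply h0ne
    ext k
    rcases Nat.lt_or_ge k 2 with h2k | h2k
    · interval_cases k
      · rw [(hHJ h0H).1, coeff_X, if_neg (by omega)]
      · rw [(hHJ h0H).2, coeff_X, if_pos rfl]
    · rw [hcon k h2k h0 h0H, coeff_X, if_neg (by omega)]
  have hspec := Nat.find_spec hPex
  have hmin : ∀ j, j < Nat.find hPex → ¬ (2 ≤ j ∧ ∃ h ∈ H, coeff (R := R) j h ≠ 0) :=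
    fun j hj => Nat.find_min hPex hj
  obtain ⟨n, hni0⟩ : ∃ n, Nat.find hPex = n + 1 :=
    ⟨Nat.find hPex - 1, by have := hspec.1; omega⟩
  have hn1 : 1 ≤ n := by
    have := hspec.1
    omega
  have hzero : ∀ j, 2 ≤ j → j < n + 1 → ∀ h ∈ H, coeff (R := R) j h = 0 := by
    intro j h2j hj h hH
    by_contra hne
    exact hmin j (by omega) ⟨h2j, h, hH, hne⟩
  obtain ⟨h2i0, hw, hwH, hwc⟩ := hspec
  rw [hni0] at hwc h2i0
  -- the witness has exact depth n
  have hwD : Dge n hw := ⟨(hHJ hwH).1, (hHJ hwH).2, fun i hi2 hin =>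
    hzero i hi2 (by omega) hw hwH⟩
  have halpha : coeff (R := R) (n + 1) hw ∈ Pset H n := ⟨hw, hwH, hwD, rfl⟩
  -- fullness at depths n+2 and n+3
  have hfull2 : ∀ r : R, r ∈ Pset H (n + 2) := by
    intro r
    have hP := Pset_full hHJ hHt hHmul hHld hnorm K hsimple hn1 halpha hwc
      (le_refl 1) r
    rwa [show n + 1 + 1 = n + 2 from by omega] at hP
  have hfull3 : ∀ r : R, r ∈ Pset H (n + 3) := by
    intro r
    have hP := Pset_full hHJ hHt hHmul hHld hnorm K hsimple hn1 halpha hwc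
      (by omega : 1 ≤ 2) r
    rwa [show n + 2 + 1 = n + 3 from by omega] at hP
  refine ⟨n, hn1, ?_, ?_⟩
  · -- 𝒥_{n+2} ⊆ H
    intro f hf
    obtain ⟨hfJ, hfz⟩ := hf
    have hfD : Dge (n + 2) f := ⟨hfJ.1, hfJ.2, fun i h2i hi => by
      have := hfz (i - 1) (by omega) (by omega)
      rwa [show i - 1 + 1 = i from by omega] at this⟩
    obtain ⟨h1, h1H, h1D, h1c⟩ := hfull2 1
    obtain ⟨h2, h2H, h2D, h2c⟩ := hfull3 1
    obtain ⟨e, eH, eD, ec⟩ := hfull2 (coeff (R := R) (n + 3) f)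
    have heJ : e ∈ Jset R := hHJ eH
    have hfeq : Jcomp e (ldiv e f) = f := Jcomp_ldiv heJ hfJ
    have hagree : ∀ j, 2 ≤ j → j ≤ n + 2 → coeff (R := R) j e = coeff (R := R) j f := by
      intro j h2j hj
      rw [eD.2.2 j h2j hj, hfD.2.2 j h2j hj]
    have hf'J : ldiv e f ∈ Jset R := ldiv_mem_Jset e f
    have hf'D2 : Dge (n + 2) (ldiv e f) :=
      div_dge heJ hfJ hf'J hfeq (n + 2) (by omega) hagree
    have hf'c : coeff (R := R) (n + 3) (ldiv e f) = 0 := by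
      have := div_sub heJ hfJ hf'J hfeq (n + 2) (by omega) hagree (n + 3)
        (by omega) (by omega)
      rw [this, ec, sub_self]
    have hf'D : Dge (n + 3) (ldiv e f) := ⟨hf'D2.1, hf'D2.2.1, fun i h2i hi => by
      rcases Nat.lt_or_ge i (n + 3) with hlt | hge
      · exact hf'D2.2.2 i h2i (by omega)
      · have : i = n + 3 := by omega
        rw [this]; exact hf'c⟩
    have hf'H : ldiv e f ∈ H :=
      solve K hHJ hHmul hnorm h1H h1D h1c h2H h2D h2c hf'D
    have := hHmul e eH (ldiv e f) hf'H
    rwa [hfeq] at this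
  · -- H ⊆ 𝒥_n
    intro h hh
    exact ⟨hHJ hh, fun i h1i hin => hzero (i + 1) (by omega) (by omega) h hh⟩
end
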